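/- arXiv:1804.07208 — 3 statements merged into one kernel-verified Lean document; each statement's English description precedes it below -/
import Mathlib

section
/- Let P_n, P be Borel probability measures on ℝ such that P_n(A) → P(A) for every Borel set A. Then the corresponding cumulative distribution functions converge uniformly: sup_t |F_n(t) - F(t)| → 0 as n → ∞. -/
open MeasureTheory Filter

/-- Polya-type lemma: pointwise convergence of CDF-like functions (together with their
left-limit companions `Gs`, `G`) implies uniform convergence. -/
lemma polya_aux (Fs Gs : ℕ → ℝ → ℝ) (F G : ℝ → ℝ)
    (hFmono : Monotone F)
    (hFnmono : ∀ n, Monotone (Fs n))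
    (hF0 : ∀ t, 0 ≤ F t) (hF1 : ∀ t, F t ≤ 1)
    (hFn0 : ∀ n t, 0 ≤ Fs n t) (hFn1 : ∀ n t, Fs n t ≤ 1)
    (hFG : ∀ t s : ℝ, t < s → F t ≤ G s)
    (hFnGn : ∀ n, ∀ t s : ℝ, t < s → Fs n t ≤ Gs n s)
    (hFtop : Tendsto F atTop (nhds 1)) (hFbot : Tendsto F atBot (nhds 0))
    (hrc : ∀ x : ℝ, Tendsto F (nhdsWithin x (Set.Ioi x)) (nhds (F x)))
    (hseq : ∀ x : ℝ, Tendsto (fun i : ℕ => F (x - 1/(i+1))) atTop (nhds (G x)))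
    (hptF : ∀ t, Tendsto (fun n => Fs n t) atTop (nhds (F t)))
    (hptG : ∀ t, Tendsto (fun n => Gs n t) atTop (nhds (G t))) :
    Tendsto (fun n => ⨆ t : ℝ, |Fs n t - F t|) atTop (nhds 0) := by
  rw [Metric.tendsto_atTop]
  intro ε hε
  obtain ⟨m, hm⟩ := exists_nat_one_div_lt (half_pos hε)
  set K : ℝ := (m : ℝ) + 1 with hKdef
  have hK0 : (0:ℝ) < K := by positivity
  -- the quantile points
  set S : ℕ → Set ℝ := fun j => {x | (j:ℝ)/K ≤ F x} with hSdef
  set tj : ℕ → ℝ := fun j => sInf (S j) with htjdef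
  have hSne : ∀ j, j ≤ m → (S j).Nonempty := by
    intro j hj
    have hlt : (j:ℝ)/K < 1 := by
      rw [div_lt_one hK0]
      have : (j:ℝ) ≤ (m:ℝ) := by exact_mod_cast hj
      linarith
    obtain ⟨x, hx⟩ := (hFtop.eventually (eventually_gt_nhds hlt)).exists
    exact ⟨x, le_of_lt hx⟩
  have hSbdd : ∀ j, 1 ≤ j → BddBelow (S j) := by
    intro j hj
    have hpos : (0:ℝ) < (j:ℝ)/K := by
      apply div_pos _ hK0
      exact_mod_cast hj
    obtain ⟨b, hb⟩ := eventually_atBot.mp (hFbot.eventually (eventually_lt_nhds hpos))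
    exact ⟨b, fun x hx => le_of_not_gt fun h => absurd hx (not_le.mpr (hb x h.le))⟩
  -- quantile properties
  have hFq : ∀ j, 1 ≤ j → j ≤ m → (j:ℝ)/K ≤ F (tj j) := by
    intro j hj1 hjm
    have hIoi : ∀ y, tj j < y → (j:ℝ)/K ≤ F y := by
      intro y hy
      obtain ⟨x, hxS, hxy⟩ := (csInf_lt_iff (hSbdd j hj1) (hSne j hjm)).mp hy
      exact le_trans hxS (hFmono hxy.le)
    refine ge_of_tendsto (hrc (tj j)) ?_
    exact eventually_mem_nhdsWithin.mono fun y hy => hIoi y hy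
  have hGq : ∀ j, 1 ≤ j → G (tj j) ≤ (j:ℝ)/K := by
    intro j hj1
    refine le_of_tendsto (hseq (tj j)) (Eventually.of_forall fun i => ?_)
    have hlt : tj j - 1/((i:ℝ)+1) < tj j := by
      have : (0:ℝ) < 1/((i:ℝ)+1) := by positivity
      linarith
    have hns : tj j - 1/((i:ℝ)+1) ∉ S j := by
      intro hmem
      exact absurd (csInf_le (hSbdd j hj1) hmem) (not_le.mpr hlt)
    have : ¬ ((j:ℝ)/K ≤ F (tj j - 1/((i:ℝ)+1))) := hns
    linarith [not_le.mp this]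
  -- the finitely many control quantities
  set D : ℕ → ℝ := fun n => ∑ j ∈ Finset.Icc 1 m,
      (|Fs n (tj j) - F (tj j)| + |Gs n (tj j) - G (tj j)|) with hDdef
  have hD0 : Tendsto D atTop (nhds 0) := by
    have : Tendsto D atTop (nhds (∑ j ∈ Finset.Icc 1 m, (0:ℝ))) := by
      apply tendsto_finset_sum
      intro j _
      have h1 : Tendsto (fun n => Fs n (tj j) - F (tj j)) atTop (nhds 0) := by
        simpa using (hptF (tj j)).sub_const (F (tj j))
      have h2 : Tendsto (fun n => Gs n (tj j) - G (tj j)) atTop (nhds 0) := by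
        simpa using (hptG (tj j)).sub_const (G (tj j))
      simpa using h1.abs.add h2.abs
    simpa using this
  have hDnonneg : ∀ n, 0 ≤ D n := by
    intro n
    apply Finset.sum_nonneg
    intro j _
    positivity
  have habsF : ∀ n, ∀ j, 1 ≤ j → j ≤ m → |Fs n (tj j) - F (tj j)| ≤ D n := by
    intro n j hj1 hjm
    have hjmem : j ∈ Finset.Icc 1 m := Finset.mem_Icc.mpr ⟨hj1, hjm⟩
    have h := Finset.single_le_sum
      (f := fun j => |Fs n (tj j) - F (tj j)| + |Gs n (tj j) - G (tj j)|)
      (fun i _ => by positivity) hjmem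
    have h' : |Fs n (tj j) - F (tj j)| + |Gs n (tj j) - G (tj j)| ≤ D n := h
    have := abs_nonneg (Gs n (tj j) - G (tj j))
    linarith
  have habsG : ∀ n, ∀ j, 1 ≤ j → j ≤ m → |Gs n (tj j) - G (tj j)| ≤ D n := by
    intro n j hj1 hjm
    have hjmem : j ∈ Finset.Icc 1 m := Finset.mem_Icc.mpr ⟨hj1, hjm⟩
    have h := Finset.single_le_sum
      (f := fun j => |Fs n (tj j) - F (tj j)| + |Gs n (tj j) - G (tj j)|)
      (fun i _ => by positivity) hjmem
    have h' : |Fs n (tj j) - F (tj j)| + |Gs n (tj j) - G (tj j)| ≤ D n := h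
    have := abs_nonneg (Fs n (tj j) - F (tj j))
    linarith
  -- key pointwise bound
  have key : ∀ n, ∀ t : ℝ, |Fs n t - F t| ≤ D n + 1/K := by
    intro n t
    set J : Finset ℕ := (Finset.Icc 1 m).filter (fun j => tj j ≤ t) with hJdef
    rcases J.eq_empty_or_nonempty with hJe | hJne
    · rcases Nat.eq_zero_or_pos m with hm0 | hm1
      · -- K = 1, trivial bound
        have hK1 : (1:ℝ)/K = 1 := by rw [hKdef, hm0]; norm_num
        have := hF0 t; have := hF1 t; have := hFn0 n t; have := hFn1 n t
        have := hDnonneg n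
        rw [abs_le]; constructor <;> linarith
      · -- t < tj 1
        have h1m : 1 ∈ Finset.Icc 1 m := Finset.mem_Icc.mpr ⟨le_refl 1, hm1⟩
        have ht1 : t < tj 1 := by
          by_contra h
          have : (1:ℕ) ∈ J := by
            rw [hJdef, Finset.mem_filter]
            exact ⟨h1m, not_lt.mp h⟩
          rw [hJe] at this
          exact absurd this (Finset.notMem_empty 1)
        have hFt : F t ≤ 1/K := le_trans (hFG t (tj 1) ht1) (by simpa using hGq 1 le_rfl)
        have hFnt : Fs n t ≤ 1/K + D n := by
          have h1 : Fs n t ≤ Gs n (tj 1) := hFnGn n t (tj 1) ht1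
          have h2 := habsG n 1 le_rfl hm1
          have h3 := hGq 1 le_rfl
          simp only [Nat.cast_one] at h3
          have := abs_le.mp h2
          linarith
        have := hF0 t; have := hFn0 n t; have := hDnonneg n
        rw [abs_le]; constructor <;> linarith
    · set j0 : ℕ := J.max' hJne with hj0def
      have hj0J : j0 ∈ J := J.max'_mem hJne
      have hj0mem : j0 ∈ Finset.Icc 1 m := (Finset.mem_filter.mp hj0J).1
      have hj0t : tj j0 ≤ t := (Finset.mem_filter.mp hj0J).2
      obtain ⟨hj01, hj0m⟩ := Finset.mem_Icc.mp hj0mem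
      have hFtlow : (j0:ℝ)/K ≤ F t := le_trans (hFq j0 hj01 hj0m) (hFmono hj0t)
      have hFntlow : (j0:ℝ)/K - D n ≤ Fs n t := by
        have h1 : Fs n (tj j0) ≤ Fs n t := hFnmono n hj0t
        have h2 := abs_le.mp (habsF n j0 hj01 hj0m)
        have h3 := hFq j0 hj01 hj0m
        linarith
      rcases eq_or_lt_of_le hj0m with hj0top | hj0lt
      · -- top case : j0 = m
        have hmK : (m:ℝ)/K = 1 - 1/K := by
          rw [hKdef]; field_simp; ring
        rw [hj0top] at hFtlow hFntlow
        have := hF1 t; have := hFn1 n t; have := hDnonneg n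
        rw [abs_le]; constructor <;> linarith [hmK]
      · -- middle case : tj j0 ≤ t < tj (j0+1)
        have hj1mem : j0 + 1 ∈ Finset.Icc 1 m := Finset.mem_Icc.mpr ⟨by omega, by omega⟩
        have htj1 : t < tj (j0+1) := by
          by_contra h
          have hmem : j0 + 1 ∈ J := by
            rw [hJdef, Finset.mem_filter]
            exact ⟨hj1mem, not_lt.mp h⟩
          have := J.le_max' _ hmem
          omega
        have hcast : ((j0+1:ℕ):ℝ)/K = (j0:ℝ)/K + 1/K := by
          push_cast; rw [add_div]
        have hFtup : F t ≤ (j0:ℝ)/K + 1/K := by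
          have h1 : F t ≤ G (tj (j0+1)) := hFG t _ htj1
          have h2 := hGq (j0+1) (by omega)
          rw [hcast] at h2
          linarith
        have hFntup : Fs n t ≤ (j0:ℝ)/K + 1/K + D n := by
          have h1 : Fs n t ≤ Gs n (tj (j0+1)) := hFnGn n t _ htj1
          have h2 := abs_le.mp (habsG n (j0+1) (by omega) (by omega))
          have h3 := hGq (j0+1) (by omega)
          rw [hcast] at h3
          linarith
        rw [abs_le]; constructor <;> linarith
  -- conclude
  have hev : ∀ᶠ n in atTop, D n < ε/2 := hD0.eventually (eventually_lt_nhds (half_pos hε))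
  obtain ⟨N, hN⟩ := eventually_atTop.mp hev
  refine ⟨N, fun n hn => ?_⟩
  have hsup_nonneg : 0 ≤ ⨆ t : ℝ, |Fs n t - F t| :=
    Real.iSup_nonneg fun t => abs_nonneg _
  have hsup_le : (⨆ t : ℝ, |Fs n t - F t|) ≤ D n + 1/K := ciSup_le (key n)
  rw [Real.dist_eq, sub_zero, abs_of_nonneg hsup_nonneg]
  have := hN n hn
  calc (⨆ t : ℝ, |Fs n t - F t|) ≤ D n + 1/K := hsup_le
    _ < ε/2 + ε/2 := by rw [hKdef]; exact add_lt_add this hm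
    _ = ε := by ring

/-- If Borel probability measures `Pₙ` on ℝ converge setwise to `P`, then the corresponding
cumulative distribution functions converge uniformly. -/
theorem stmt7
    (Ps : ℕ → Measure ℝ) (P : Measure ℝ)
    [∀ n, IsProbabilityMeasure (Ps n)] [IsProbabilityMeasure P]
    (hsetwise : ∀ A : Set ℝ, MeasurableSet A →
      Tendsto (fun n => (Ps n A).toReal) atTop (nhds (P A).toReal)) :
    Tendsto (fun n => ⨆ t : ℝ, |(Ps n (Set.Iic t)).toReal - (P (Set.Iic t)).toReal|)
      atTop (nhds 0) := by
  have hcdf : ∀ x : ℝ, ProbabilityTheory.cdf P x = (P (Set.Iic x)).toReal := fun x =>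
    ProbabilityTheory.cdf_eq_real P x
  have hle1 : ∀ (Q : Measure ℝ), IsProbabilityMeasure Q → ∀ s : Set ℝ, (Q s).toReal ≤ 1 := by
    intro Q hQ s
    have h1 : Q s ≤ 1 := by
      rw [← measure_univ (μ := Q)]
      exact measure_mono (Set.subset_univ s)
    calc (Q s).toReal ≤ (1 : ENNReal).toReal := ENNReal.toReal_mono ENNReal.one_ne_top h1
      _ = 1 := by simp
  apply polya_aux
    (fun n t => (Ps n (Set.Iic t)).toReal) (fun n t => (Ps n (Set.Iio t)).toReal)
    (fun t => (P (Set.Iic t)).toReal) (fun t => (P (Set.Iio t)).toReal)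
  · exact fun a b hab => ENNReal.toReal_mono (measure_ne_top _ _)
      (measure_mono (Set.Iic_subset_Iic.mpr hab))
  · exact fun n a b hab => ENNReal.toReal_mono (measure_ne_top _ _)
      (measure_mono (Set.Iic_subset_Iic.mpr hab))
  · exact fun t => ENNReal.toReal_nonneg
  · exact fun t => hle1 P inferInstance _
  · exact fun n t => ENNReal.toReal_nonneg
  · exact fun n t => hle1 (Ps n) inferInstance _
  · exact fun t s h => ENNReal.toReal_mono (measure_ne_top _ _)
      (measure_mono (Set.Iic_subset_Iio.mpr h))
  · exact fun n t s h => ENNReal.toReal_mono (measure_ne_top _ _)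
      (measure_mono (Set.Iic_subset_Iio.mpr h))
  · have h := ProbabilityTheory.tendsto_cdf_atTop (μ := P)
    exact h.congr hcdf
  · have h := ProbabilityTheory.tendsto_cdf_atBot (μ := P)
    exact h.congr hcdf
  · intro x
    have h : Tendsto (ProbabilityTheory.cdf P) (nhdsWithin x (Set.Ioi x))
        (nhds (ProbabilityTheory.cdf P x)) :=
      ((ProbabilityTheory.cdf P).right_continuous x).mono Set.Ioi_subset_Ici_self
    rw [hcdf x] at h
    exact h.congr hcdf
  · intro x
    have hmono : Monotone fun i : ℕ => Set.Iic (x - 1/((i:ℝ)+1)) := by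
      intro i i' hii'
      apply Set.Iic_subset_Iic.mpr
      have h1 : (1:ℝ)/((i':ℝ)+1) ≤ 1/((i:ℝ)+1) := by
        apply one_div_le_one_div_of_le (by positivity)
        exact_mod_cast Nat.succ_le_succ hii'
      linarith
    have hU : (⋃ i : ℕ, Set.Iic (x - 1/((i:ℝ)+1))) = Set.Iio x := by
      ext y
      simp only [Set.mem_iUnion, Set.mem_Iic, Set.mem_Iio]
      constructor
      · rintro ⟨i, hi⟩
        have : (0:ℝ) < 1/((i:ℝ)+1) := by positivity
        linarith
      · intro h
        obtain ⟨i, hi⟩ := exists_nat_one_div_lt (sub_pos.mpr h)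
        exact ⟨i, by linarith⟩
    have h := tendsto_measure_iUnion_atTop (μ := P) hmono
    rw [hU] at h
    exact (ENNReal.tendsto_toReal (measure_ne_top P _)).comp h
  · exact fun t => hsetwise _ measurableSet_Iic
  · exact fun t => hsetwise _ measurableSet_Iio
end

section
/- Consider the fitness model where at odd times X_{k+1} species are created with i.i.d. fitness values drawn from a probability measure μ on [0,1], and at even times Y_{k+1} species with the lowest fitness are removed, with {(X_n, Y_n)} i.i.d., 0 < E[Y] < E[X] < ∞. Let f_c = inf{f : F(f) > E[Y]/E[X]} where F is the c.d.f. of μ. Then for every f with E[F(f)X - Y] > 0, the number Z_n([0,f]) of living species with fitness in [0,f] tends to infinity almost surely. -/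
open MeasureTheory ProbabilityTheory Filter
open scoped ENNReal NNReal

/-- Index type for the driving randomness of the fitness model: `inl n` indexes the pair
`(Xₙ, Yₙ)` of birth/death counts and `inr (n, i)` indexes the fitness of the `i`-th species
created at stage `n`. -/
def fitnessModelType : (ℕ ⊕ ℕ × ℕ) → Type
  | .inl _ => ℕ × ℕ
  | .inr _ => ℝ

def fitnessModelSpace : ∀ j : ℕ ⊕ ℕ × ℕ, MeasurableSpace (fitnessModelType j)
  | .inl _ => (inferInstance : MeasurableSpace (ℕ × ℕ))
  | .inr _ => (inferInstance : MeasurableSpace ℝ)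

/-- The joint family of birth/death counts and fitness values. -/
def fitnessModelFam {Ω : Type*} (X Y : ℕ → Ω → ℕ) (U : ℕ → ℕ → Ω → ℝ) :
    ∀ j : ℕ ⊕ ℕ × ℕ, Ω → fitnessModelType j
  | .inl n => fun ω => (X n ω, Y n ω)
  | .inr p => U p.1 p.2

/-- Auxiliary family of sets used to apply independence. -/
def fitnessSets (x y : ℕ) (S : Finset ℕ) (f : ℝ) : ∀ j : ℕ ⊕ ℕ × ℕ, Set (fitnessModelType j)
  | .inl _ => ({((x : ℕ), (y : ℕ))} : Set (ℕ × ℕ))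
  | .inr q => ((if q.2 ∈ S then Set.Iic f else Set.Ioi f : Set ℝ) : Set ℝ)

/-- In the fitness model (births `X_{k+1}` at odd times with i.i.d. fitness drawn from `μ`,
deaths of the `Y_{k+1}` least-fit species at even times, `0 < E[Y] < E[X] < ∞`), if
`E[F(f)·X - Y] > 0`, then the number of living species with fitness in `[0, f]` tends to
infinity almost surely. -/
theorem stmt18
    {Ω : Type*} [MeasurableSpace Ω] (P : Measure Ω) [IsProbabilityMeasure P]
    (μ : Measure ℝ) [IsProbabilityMeasure μ] (hμsupp : μ (Set.Icc (0 : ℝ) 1) = 1)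
    (X Y : ℕ → Ω → ℕ) (U : ℕ → ℕ → Ω → ℝ)
    (hXm : ∀ n, Measurable (X n)) (hYm : ∀ n, Measurable (Y n))
    (hUm : ∀ n i, Measurable (U n i))
    -- the pairs (Xₙ, Yₙ) and all fitness values Uₙᵢ are jointly independent
    (hindep : iIndepFun (m := fitnessModelSpace) (fitnessModelFam X Y U) P)
    -- the pairs (Xₙ, Yₙ) are identically distributed
    (hid : ∀ n, IdentDistrib (fun ω => (X n ω, Y n ω)) (fun ω => (X 0 ω, Y 0 ω)) P P)
    -- every fitness value has law μ
    (hU : ∀ n i, P.map (U n i) = μ)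
    -- 0 < E[Y] < E[X] < ∞
    (hXint : Integrable (fun ω => (X 0 ω : ℝ)) P)
    (hYint : Integrable (fun ω => (Y 0 ω : ℝ)) P)
    (hYpos : 0 < ∫ ω, (Y 0 ω : ℝ) ∂P)
    (hYX : ∫ ω, (Y 0 ω : ℝ) ∂P < ∫ ω, (X 0 ω : ℝ) ∂P)
    (f : ℝ)
    -- E[F(f)·X - Y] > 0, where F(f) = μ([0,f]) = μ((-∞,f]) since μ lives on [0,1]
    (hf : 0 < (μ (Set.Iic f)).toReal * ∫ ω, (X 0 ω : ℝ) ∂P - ∫ ω, (Y 0 ω : ℝ) ∂P)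
    -- number of species created at stage n with fitness ≤ f
    (Xt : ℕ → Ω → ℕ)
    (hXt : ∀ n ω, Xt n ω = ((Finset.range (X n ω)).filter (fun i => U n i ω ≤ f)).card)
    -- Z n ω = Z_n([0,f]), the number of living species with fitness in [0,f] at time n:
    -- at odd times the new species with fitness ≤ f are added; at even times Y_{k+1}
    -- least-fit species are removed, which removes species from [0,f] first
    (Z : ℕ → Ω → ℤ)
    (hZ0 : ∀ ω, Z 0 ω = 0)
    (hZodd : ∀ k ω, Z (2 * k + 1) ω = Z (2 * k) ω + (Xt (k + 1) ω : ℤ))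
    (hZeven : ∀ k ω, Z (2 * k + 2) ω = max 0 (Z (2 * k + 1) ω - (Y (k + 1) ω : ℤ))) :
    ∀ᵐ ω ∂P, Tendsto (fun n => Z n ω) atTop atTop := by
  classical
  set p : ℝ≥0∞ := μ (Set.Iic f) with hpdef
  have hp1 : p ≤ 1 := prob_le_one
  set pb : ℝ≥0∞ := 1 - p with hpbdef
  -- measurability of the family
  have hfam : ∀ j, @Measurable Ω (fitnessModelType j) _ (fitnessModelSpace j)
      (fitnessModelFam X Y U j) := by
    rintro (n | q)
    · exact (hXm n).prodMk (hYm n)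
    · exact hUm q.1 q.2
  set s : (ℕ ⊕ ℕ × ℕ) → MeasurableSpace Ω :=
    fun j => (fitnessModelSpace j).comap (fitnessModelFam X Y U j) with hsdef
  have h_le : ∀ j, s j ≤ ‹MeasurableSpace Ω› := fun j => (hfam j).comap_le
  have hiIndep : iIndep s P := hindep.iIndep
  -- blocks
  set blk : (ℕ ⊕ ℕ × ℕ) → ℕ := Sum.elim id Prod.fst with hblkdef
  set M : ℕ → MeasurableSpace Ω := fun n => ⨆ j ∈ blk ⁻¹' {n + 1}, s j with hMdef
  have hM_le : ∀ n, M n ≤ ‹MeasurableSpace Ω› := fun n =>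
    iSup₂_le fun j _ => h_le j
  -- block-measurability of the coordinates
  have hcomap : ∀ j, @Measurable Ω (fitnessModelType j) (s j) (fitnessModelSpace j)
      (fitnessModelFam X Y U j) := fun j => Measurable.le le_rfl (fun t ht => ⟨t, ht, rfl⟩)
  have hsleM : ∀ n j, blk j = n + 1 → s j ≤ M n := by
    intro n j hj
    exact le_biSup _ (by simpa [hblkdef] using hj)
  have hXaM : ∀ n, Measurable[M n] (X (n + 1)) := by
    intro n
    have h1 : Measurable[s (Sum.inl (n + 1))] (X (n + 1)) :=
      (measurable_fst.comp (hcomap (Sum.inl (n + 1))) :)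
    exact h1.mono (hsleM n _ rfl) le_rfl
  have hYaM : ∀ n, Measurable[M n] (Y (n + 1)) := by
    intro n
    have h1 : Measurable[s (Sum.inl (n + 1))] (Y (n + 1)) :=
      (measurable_snd.comp (hcomap (Sum.inl (n + 1))) :)
    exact h1.mono (hsleM n _ rfl) le_rfl
  have hUaM : ∀ n i, Measurable[M n] (U (n + 1) i) := by
    intro n i
    have h1 : Measurable[s (Sum.inr (n + 1, i))] (U (n + 1) i) := hcomap (Sum.inr (n + 1, i))
    exact h1.mono (hsleM n _ rfl) le_rfl
  -- counting functions
  have hcntM : ∀ n (x : ℕ), Measurable[M n]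
      (fun ω => (((Finset.range x).filter (fun i => U (n + 1) i ω ≤ f)).card : ℕ)) := by
    intro n x
    have : (fun ω => (((Finset.range x).filter (fun i => U (n + 1) i ω ≤ f)).card : ℕ))
        = fun ω => ∑ i ∈ Finset.range x, if U (n + 1) i ω ≤ f then 1 else 0 := by
      funext ω; rw [Finset.card_filter]
    rw [this]
    exact Finset.measurable_sum _ fun i _ =>
      Measurable.ite ((hUaM n i) measurableSet_Iic) measurable_const measurable_const
  have hXtM : ∀ n, Measurable[M n] (Xt (n + 1)) := by
    intro n
    apply @measurable_to_countable' ℕ Ω _ _ (M n)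
    intro m
    have : Xt (n + 1) ⁻¹' {m} = ⋃ x : ℕ, ((X (n + 1)) ⁻¹' {x} ∩
        {ω | (((Finset.range x).filter (fun i => U (n + 1) i ω ≤ f)).card : ℕ) = m}) := by
      ext ω
      simp only [Set.mem_preimage, Set.mem_singleton_iff, Set.mem_iUnion, Set.mem_inter_iff,
        Set.mem_setOf_eq]
      constructor
      · intro h; exact ⟨X (n + 1) ω, rfl, by rw [← hXt]; exact h⟩
      · rintro ⟨x, hx, hc⟩; rw [hXt, hx]; exact hc
    rw [this]
    exact MeasurableSet.iUnion fun x =>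
      ((hXaM n) (measurableSet_singleton x)).inter ((hcntM n x) (measurableSet_singleton m))
  -- the increments
  set W : ℕ → Ω → ℝ := fun n ω => (Xt (n + 1) ω : ℝ) - (Y (n + 1) ω : ℝ) with hWdef
  have hWM : ∀ n, Measurable[M n] (W n) := fun n =>
    (measurable_from_top.comp (hXtM n)).sub (measurable_from_top.comp (hYaM n))
  have hWMeas : ∀ n, Measurable (W n) := fun n => (hWM n).mono (hM_le n) le_rfl
  -- pairwise independence
  have hindepW : Pairwise (Function.onFun (IndepFun · · P) W) := by
    intro m n hmn
    have h1 : Indep (⨆ j ∈ blk ⁻¹' {m + 1}, s j) (⨆ j ∈ (blk ⁻¹' {m + 1})ᶜ, s j) P :=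
      indep_biSup_compl h_le hiIndep _
    have hsub : blk ⁻¹' {n + 1} ⊆ (blk ⁻¹' {m + 1})ᶜ := by
      intro j hj
      simp only [Set.mem_preimage, Set.mem_singleton_iff] at hj
      simp only [Set.mem_compl_iff, Set.mem_preimage, Set.mem_singleton_iff, hj]
      omega
    have h2 : Indep (M m) (M n) P :=
      indep_of_indep_of_le_right h1 (biSup_mono hsub)
    have h3 : Indep (MeasurableSpace.comap (W m) (borel ℝ)) (MeasurableSpace.comap (W n) (borel ℝ)) P := by
      refine indep_of_indep_of_le_left (indep_of_indep_of_le_right h2 ?_) ?_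
      · exact (measurable_iff_comap_le.mp (hWM n))
      · exact (measurable_iff_comap_le.mp (hWM m))
    exact h3
  -- basic probabilities
  have hUp : ∀ a i, P (U a i ⁻¹' Set.Iic f) = p := by
    intro a i
    rw [hpdef, ← hU a i, Measure.map_apply (hUm a i) measurableSet_Iic]
  have hUp' : ∀ a i, P (U a i ⁻¹' Set.Ioi f) = pb := by
    intro a i
    have : U a i ⁻¹' Set.Ioi f = (U a i ⁻¹' Set.Iic f)ᶜ := by
      ext ω; simp [not_le]
    rw [this, prob_compl_eq_one_sub ((hUm a i) measurableSet_Iic), hUp]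
  -- the key product formula
  have key : ∀ (a x y : ℕ) (S : Finset ℕ),
      P ((fun ω => (X a ω, Y a ω)) ⁻¹' {((x : ℕ), (y : ℕ))} ∩
        {ω | ∀ i ∈ Finset.range x, (U a i ω ≤ f ↔ i ∈ S)})
      = P ((fun ω => (X a ω, Y a ω)) ⁻¹' {((x : ℕ), (y : ℕ))}) *
          ∏ i ∈ Finset.range x, (if i ∈ S then p else pb) := by
    intro a x y S
    have hmeas : ∀ j, MeasurableSet[fitnessModelSpace j] (fitnessSets x y S f j) := by
      rintro (k | q)
      · have h : MeasurableSet ({((x : ℕ), (y : ℕ))} : Set (ℕ × ℕ)) := measurableSet_singleton _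
        exact h
      · have h : MeasurableSet ((if q.2 ∈ S then Set.Iic f else Set.Ioi f : Set ℝ)) := by
          split
          · exact measurableSet_Iic
          · exact measurableSet_Ioi
        exact h
    have hnotmem : (Sum.inl a : ℕ ⊕ ℕ × ℕ) ∉
        (Finset.range x).image (fun i => (Sum.inr (a, i) : ℕ ⊕ ℕ × ℕ)) := by simp
    have hinj : ∀ i ∈ Finset.range x, ∀ j ∈ Finset.range x,
        (Sum.inr (a, i) : ℕ ⊕ ℕ × ℕ) = Sum.inr (a, j) → i = j := by
      intro i _ j _ h; simpa using h
    have hprod := hindep.measure_inter_preimage_eq_mul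
      (S := insert (Sum.inl a) ((Finset.range x).image (fun i => (Sum.inr (a, i) : ℕ ⊕ ℕ × ℕ))))
      (sets := fitnessSets x y S f)
      (fun j _ => hmeas j)
    rw [Finset.set_biInter_insert, Finset.set_biInter_finset_image,
      Finset.prod_insert hnotmem, Finset.prod_image hinj] at hprod
    have hEq : (⋂ i ∈ Finset.range x,
        (fitnessModelFam X Y U (Sum.inr (a, i)) ⁻¹' fitnessSets x y S f (Sum.inr (a, i))))
        = {ω | ∀ i ∈ Finset.range x, (U a i ω ≤ f ↔ i ∈ S)} := by
      ext ω
      simp only [Set.mem_iInter, Set.mem_setOf_eq, Set.mem_preimage]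
      refine forall_congr' fun i => forall_congr' fun _ => ?_
      by_cases hi : i ∈ S
      · simp [hi, fitnessModelFam, fitnessSets]; exact Iff.rfl
      · simp [hi, fitnessModelFam, fitnessSets, not_le]; exact Iff.rfl
    have hprodR : ∀ i ∈ Finset.range x,
        P (fitnessModelFam X Y U (Sum.inr (a, i)) ⁻¹' fitnessSets x y S f (Sum.inr (a, i)))
          = (if i ∈ S then p else pb) := by
      intro i _
      by_cases hi : i ∈ S
      · simp only [fitnessModelFam, fitnessSets, hi, ↓reduceIte]; exact hUp a i
      · simp only [fitnessModelFam, fitnessSets, hi, ↓reduceIte]; exact hUp' a i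
    rw [Finset.prod_congr rfl hprodR] at hprod
    convert hprod using 3
    · rfl
    · exact hEq.symm
    rfl
  -- identical distribution of the pairs at singletons
  have hpairP : ∀ a x y, P ((fun ω => (X a ω, Y a ω)) ⁻¹' {((x : ℕ), (y : ℕ))}) =
      P ((fun ω => (X 0 ω, Y 0 ω)) ⁻¹' {((x : ℕ), (y : ℕ))}) := by
    intro a x y
    have h := (hid a).map_eq
    have h1 := Measure.map_apply (μ := P) ((hXm a).prodMk (hYm a))
      (measurableSet_singleton ((x : ℕ), (y : ℕ)))
    have h2 := Measure.map_apply (μ := P) ((hXm 0).prodMk (hYm 0))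
      (measurableSet_singleton ((x : ℕ), (y : ℕ)))
    rw [← h1, ← h2, h]
  -- the law of W n does not depend on n
  have law : ∀ n (B : Set ℝ), MeasurableSet B → P (W n ⁻¹' B) =
      ∑' q : ℕ × ℕ, P ((fun ω => (X 0 ω, Y 0 ω)) ⁻¹' {q}) *
        ∑ S ∈ (Finset.range q.1).powerset.filter (fun S => ((S.card : ℝ) - q.2) ∈ B),
          ∏ i ∈ Finset.range q.1, (if i ∈ S then p else pb) := by
    intro n B hB
    set a := n + 1 with hadef
    set A : ℕ × ℕ → Set Ω := fun q => (fun ω => (X a ω, Y a ω)) ⁻¹' {q} with hAdef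
    set E : ℕ × ℕ → Finset ℕ → Set Ω :=
      fun q S => {ω | ∀ i ∈ Finset.range q.1, (U a i ω ≤ f ↔ i ∈ S)} with hEdef
    set fs : ℕ × ℕ → Finset (Finset ℕ) :=
      fun q => (Finset.range q.1).powerset.filter (fun S => ((S.card : ℝ) - q.2) ∈ B) with hfsdef
    have hAmeas : ∀ q, MeasurableSet (A q) :=
      fun q => ((hXm a).prodMk (hYm a)) (measurableSet_singleton q)
    have hEmeas : ∀ q S, MeasurableSet (E q S) := by
      intro q S
      have h : E q S = ⋂ i ∈ Finset.range q.1,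
          (if i ∈ S then U a i ⁻¹' Set.Iic f else U a i ⁻¹' Set.Ioi f) := by
        ext ω
        simp only [hEdef, Set.mem_setOf_eq, Set.mem_iInter]
        refine forall_congr' fun i => forall_congr' fun _ => ?_
        by_cases hi : i ∈ S <;> simp [hi, not_le]
      rw [h]
      refine Set.Finite.measurableSet_biInter (Finset.finite_toSet _) fun i _ => ?_
      split
      · exact (hUm a i) measurableSet_Iic
      · exact (hUm a i) measurableSet_Ioi
    have hSeqS : ∀ q (S S' : Finset ℕ), S ⊆ Finset.range q.1 → S' ⊆ Finset.range q.1 →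
        ∀ ω, ω ∈ E q S → ω ∈ E q S' → S = S' := by
      intro q S S' hS hS' ω h1 h2
      ext i
      constructor
      · intro hiS
        exact (h2 i (hS hiS)).mp ((h1 i (hS hiS)).mpr hiS)
      · intro hiS'
        exact (h1 i (hS' hiS')).mp ((h2 i (hS' hiS')).mpr hiS')
    have hset : W n ⁻¹' B = ⋃ q : ℕ × ℕ, (A q ∩ ⋃ S ∈ fs q, E q S) := by
      ext ω
      simp only [Set.mem_preimage, Set.mem_iUnion, Set.mem_inter_iff, hAdef, hEdef, hfsdef,
        Set.mem_singleton_iff, Finset.mem_filter, Finset.mem_powerset, Set.mem_setOf_eq]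
      constructor
      · intro hWB
        refine ⟨(X a ω, Y a ω), rfl, (Finset.range (X a ω)).filter (fun i => U a i ω ≤ f),
          ⟨⟨Finset.filter_subset _ _, ?_⟩, ?_⟩⟩
        · have hc : ((Finset.range (X a ω)).filter (fun i => U a i ω ≤ f)).card = Xt a ω :=
            (hXt a ω).symm
          rw [hc]
          exact hWB
        · intro i hi
          simp [Finset.mem_filter, hi]
      · rintro ⟨q, hq, S, ⟨hSsub, hScard⟩, hSE⟩
        have hx : X a ω = q.1 := by rw [← hq]
        have hy : Y a ω = q.2 := by rw [← hq]
        have hSeq : S = (Finset.range q.1).filter (fun i => U a i ω ≤ f) := by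
          ext i
          simp only [Finset.mem_filter]
          constructor
          · intro hiS
            exact ⟨hSsub hiS, (hSE i (hSsub hiS)).mpr hiS⟩
          · rintro ⟨hir, hUf⟩
            exact (hSE i hir).mp hUf
        have hXtc : Xt a ω = S.card := by
          rw [hXt a ω, hx, hSeq]
        show ((Xt a ω : ℝ) - (Y a ω : ℝ)) ∈ B
        rw [hXtc, hy]
        exact hScard
    have hdis : Pairwise (Function.onFun Disjoint fun q => A q ∩ ⋃ S ∈ fs q, E q S) := by
      intro q q' hqq'
      refine Set.disjoint_left.mpr ?_
      rintro ω ⟨hωA, -⟩ ⟨hωA', -⟩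
      exact hqq' (hωA.symm.trans hωA')
    have hDmeas : ∀ q, MeasurableSet (A q ∩ ⋃ S ∈ fs q, E q S) := fun q =>
      (hAmeas q).inter (Set.Finite.measurableSet_biUnion (Finset.finite_toSet _)
        fun S _ => hEmeas q S)
    rw [hset, measure_iUnion hdis hDmeas]
    refine tsum_congr fun q => ?_
    have h1 : A q ∩ ⋃ S ∈ fs q, E q S = ⋃ S ∈ fs q, (A q ∩ E q S) := by
      rw [Set.inter_iUnion₂]
    have hdis2 : Set.PairwiseDisjoint (↑(fs q)) (fun S => A q ∩ E q S) := by
      intro S hS S' hS' hne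
      refine Set.disjoint_left.mpr ?_
      rintro ω ⟨-, hωE⟩ ⟨-, hωE'⟩
      simp only [hfsdef, Finset.coe_filter, Set.mem_setOf_eq, Finset.mem_powerset] at hS hS'
      exact hne (hSeqS q S S' hS.1 hS'.1 ω hωE hωE')
    rw [h1, measure_biUnion_finset hdis2 (fun S _ => (hAmeas q).inter (hEmeas q S))]
    have h2 : ∀ S ∈ fs q, P (A q ∩ E q S) =
        P (A q) * ∏ i ∈ Finset.range q.1, (if i ∈ S then p else pb) := by
      intro S _
      exact key a q.1 q.2 S
    rw [Finset.sum_congr rfl h2, ← Finset.mul_sum]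
    congr 1
    exact hpairP a q.1 q.2
  have hident : ∀ n, IdentDistrib (W n) (W 0) P P := by
    intro n
    refine ⟨(hWMeas n).aemeasurable, (hWMeas 0).aemeasurable, ?_⟩
    refine Measure.ext fun B hB => ?_
    rw [Measure.map_apply (hWMeas n) hB, Measure.map_apply (hWMeas 0) hB, law n B hB, law 0 B hB]
  -- layer-cake for ℕ-valued functions
  have hlay : ∀ (V : Ω → ℕ), Measurable V →
      ∫⁻ ω, (V ω : ℝ≥0∞) ∂P = ∑' i : ℕ, P {ω | i < V ω} := by
    intro V hV
    have h1 : ∀ ω, (V ω : ℝ≥0∞)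
        = ∑' i : ℕ, Set.indicator {ω' | i < V ω'} (fun _ => (1 : ℝ≥0∞)) ω := by
      intro ω
      rw [tsum_eq_sum (s := Finset.range (V ω)) ?_]
      · rw [Finset.sum_congr rfl (fun i hi => ?_), Finset.sum_const, Finset.card_range,
          nsmul_eq_mul, mul_one]
        · simp only [Finset.mem_range] at hi
          simp [Set.indicator_apply, hi]
      · intro i hi
        simp only [Finset.mem_range, not_lt] at hi
        simp [Set.indicator_apply, Set.mem_setOf_eq]
        omega
    calc ∫⁻ ω, (V ω : ℝ≥0∞) ∂P
        = ∫⁻ ω, ∑' i : ℕ, Set.indicator {ω' | i < V ω'} (fun _ => (1 : ℝ≥0∞)) ω ∂P :=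
          lintegral_congr h1
      _ = ∑' i : ℕ, ∫⁻ ω, Set.indicator {ω' | i < V ω'} (fun _ => (1 : ℝ≥0∞)) ω ∂P :=
          lintegral_tsum fun i =>
            (measurable_const.indicator (hV measurableSet_Ioi)).aemeasurable
      _ = ∑' i : ℕ, P {ω | i < V ω} := by
          refine tsum_congr fun i => ?_
          have hms : MeasurableSet {ω' | i < V ω'} := hV measurableSet_Ioi
          rw [lintegral_indicator hms]
          simp
  -- lintegral of the thinned counts
  have hXtlin : ∀ n, ∫⁻ ω, (Xt (n + 1) ω : ℝ≥0∞) ∂P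
      = ∑' i : ℕ, P ({ω | i < X (n + 1) ω} ∩ U (n + 1) i ⁻¹' Set.Iic f) := by
    intro n
    have h1 : ∀ ω, (Xt (n + 1) ω : ℝ≥0∞)
        = ∑' i : ℕ, Set.indicator ({ω' | i < X (n + 1) ω'} ∩ U (n + 1) i ⁻¹' Set.Iic f)
            (fun _ => (1 : ℝ≥0∞)) ω := by
      intro ω
      rw [hXt (n + 1) ω, Finset.card_filter, tsum_eq_sum (s := Finset.range (X (n + 1) ω)) ?_]
      · rw [Nat.cast_sum]
        refine Finset.sum_congr rfl fun i hi => ?_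
        simp only [Finset.mem_range] at hi
        by_cases hUf : U (n + 1) i ω ≤ f <;>
          simp [Set.indicator_apply, hi, hUf]
      · intro i hi
        simp only [Finset.mem_range, not_lt] at hi
        simp [Set.indicator_apply, Set.mem_setOf_eq]
        omega
    calc ∫⁻ ω, (Xt (n + 1) ω : ℝ≥0∞) ∂P
        = ∫⁻ ω, ∑' i : ℕ, Set.indicator ({ω' | i < X (n + 1) ω'} ∩ U (n + 1) i ⁻¹' Set.Iic f)
            (fun _ => (1 : ℝ≥0∞)) ω ∂P := lintegral_congr h1
      _ = ∑' i : ℕ, ∫⁻ ω, Set.indicator ({ω' | i < X (n + 1) ω'} ∩ U (n + 1) i ⁻¹' Set.Iic f)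
            (fun _ => (1 : ℝ≥0∞)) ω ∂P :=
          lintegral_tsum fun i => (measurable_const.indicator
            (((hXm (n + 1)) measurableSet_Ioi).inter ((hUm (n + 1) i) measurableSet_Iic))).aemeasurable
      _ = ∑' i : ℕ, P ({ω | i < X (n + 1) ω} ∩ U (n + 1) i ⁻¹' Set.Iic f) := by
          refine tsum_congr fun i => ?_
          have hms : MeasurableSet ({ω' | i < X (n + 1) ω'} ∩ U (n + 1) i ⁻¹' Set.Iic f) :=
            ((hXm (n + 1)) measurableSet_Ioi).inter ((hUm (n + 1) i) measurableSet_Iic)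
          rw [lintegral_indicator hms]
          simp
  -- independence factorization for the thinned counts
  have hPind : ∀ n i, P ({ω | i < X (n + 1) ω} ∩ U (n + 1) i ⁻¹' Set.Iic f)
      = P {ω | i < X (n + 1) ω} * p := by
    intro n i
    have hIF := hindep.indepFun
      (show (Sum.inl (n + 1) : ℕ ⊕ ℕ × ℕ) ≠ Sum.inr (n + 1, i) by simp)
    have hms : MeasurableSet ((Prod.fst : ℕ × ℕ → ℕ) ⁻¹' Set.Ioi i) :=
      measurable_fst measurableSet_Ioi
    have h := (fun (s1 : Set (ℕ × ℕ)) (s2 : Set ℝ) (h1 : MeasurableSet s1)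
        (h2 : MeasurableSet s2) =>
        (indepFun_iff_measure_inter_preimage_eq_mul.mp hIF) s1 s2 h1 h2)
      ((Prod.fst : ℕ × ℕ → ℕ) ⁻¹' Set.Ioi i) (Set.Iic f) hms measurableSet_Iic
    calc P ({ω | i < X (n + 1) ω} ∩ U (n + 1) i ⁻¹' Set.Iic f)
        = P {ω | i < X (n + 1) ω} * P (U (n + 1) i ⁻¹' Set.Iic f) := h
      _ = P {ω | i < X (n + 1) ω} * p := by rw [hUp]
  have hXtlin' : ∀ n, ∫⁻ ω, (Xt (n + 1) ω : ℝ≥0∞) ∂P = p * ∫⁻ ω, (X (n + 1) ω : ℝ≥0∞) ∂P := by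
    intro n
    rw [hXtlin n, hlay (X (n + 1)) (hXm (n + 1)), ← ENNReal.tsum_mul_left]
    exact tsum_congr fun i => by rw [hPind n i, mul_comm]
  -- transfer of lintegrals along identical distribution
  have hXcast : ∀ a, IdentDistrib (fun ω => ((X a ω : ℝ≥0∞))) (fun ω => ((X 0 ω : ℝ≥0∞))) P P :=
    fun a => ((hid a).comp measurable_fst).comp measurable_from_top
  have hXlin_eq : ∀ a, ∫⁻ ω, (X a ω : ℝ≥0∞) ∂P = ∫⁻ ω, (X 0 ω : ℝ≥0∞) ∂P :=
    fun a => (hXcast a).lintegral_eq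
  -- integral of ℕ-valued functions as toReal of the lintegral
  have hcastnorm : ∀ k : ℕ, ENNReal.ofReal ‖(k : ℝ)‖ = (k : ℝ≥0∞) := by
    intro k; rw [Real.norm_natCast, ENNReal.ofReal_natCast]
  have hNint : ∀ (V : Ω → ℕ), Measurable V → (∫⁻ ω, (V ω : ℝ≥0∞) ∂P ≠ ∞) →
      Integrable (fun ω => (V ω : ℝ)) P ∧
        ∫ ω, (V ω : ℝ) ∂P = (∫⁻ ω, (V ω : ℝ≥0∞) ∂P).toReal := by
    intro V hV hfin
    have hmeas : Measurable (fun ω => (V ω : ℝ)) := measurable_from_top.comp hV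
    have hint : Integrable (fun ω => (V ω : ℝ)) P := by
      refine ⟨hmeas.aestronglyMeasurable, ?_⟩
      rw [hasFiniteIntegral_iff_norm]
      rw [lintegral_congr fun ω => hcastnorm (V ω)]
      exact hfin.lt_top
    refine ⟨hint, ?_⟩
    rw [integral_eq_lintegral_of_nonneg_ae (Filter.Eventually.of_forall fun ω => by positivity)
      hmeas.aestronglyMeasurable]
    congr 1
    exact lintegral_congr fun ω => ENNReal.ofReal_natCast (V ω)
  have hX0fin : ∫⁻ ω, (X 0 ω : ℝ≥0∞) ∂P ≠ ∞ := by
    have h := hXint.hasFiniteIntegral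
    rw [hasFiniteIntegral_iff_norm, lintegral_congr fun ω => hcastnorm (X 0 ω)] at h
    exact h.ne
  have hX0val : ∫ ω, (X 0 ω : ℝ) ∂P = (∫⁻ ω, (X 0 ω : ℝ≥0∞) ∂P).toReal :=
    (hNint (X 0) (hXm 0) hX0fin).2
  -- Xt 1 : integrability and mean
  have hXtMeas : ∀ n, Measurable (Xt (n + 1)) := fun n => (hXtM n).mono (hM_le n) le_rfl
  have hXt1lin : ∫⁻ ω, (Xt 1 ω : ℝ≥0∞) ∂P = p * ∫⁻ ω, (X 0 ω : ℝ≥0∞) ∂P := by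
    have := hXtlin' 0
    rwa [hXlin_eq 1] at this
  have hXt1fin : ∫⁻ ω, (Xt 1 ω : ℝ≥0∞) ∂P ≠ ∞ := by
    rw [hXt1lin]
    exact ENNReal.mul_ne_top (lt_of_le_of_lt hp1 ENNReal.one_lt_top).ne hX0fin
  obtain ⟨hXt1int, hXt1val⟩ := hNint (Xt 1) (hXtMeas 0) hXt1fin
  have hXt1mean : ∫ ω, (Xt 1 ω : ℝ) ∂P = p.toReal * ∫ ω, (X 0 ω : ℝ) ∂P := by
    rw [hXt1val, hXt1lin, ENNReal.toReal_mul, hX0val]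
  -- Y 1 : integrability and mean
  have hYid : ∀ a, IdentDistrib (fun ω => (Y a ω : ℝ)) (fun ω => (Y 0 ω : ℝ)) P P :=
    fun a => ((hid a).comp measurable_snd).comp measurable_from_top
  have hY1int : Integrable (fun ω => (Y 1 ω : ℝ)) P := (hYid 1).integrable_iff.mpr hYint
  have hY1mean : ∫ ω, (Y 1 ω : ℝ) ∂P = ∫ ω, (Y 0 ω : ℝ) ∂P := (hYid 1).integral_eq
  -- mean of W 0
  have hWint : Integrable (W 0) P := hXt1int.sub hY1int
  have hWmean : ∫ ω, W 0 ω ∂P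
      = p.toReal * (∫ ω, (X 0 ω : ℝ) ∂P) - ∫ ω, (Y 0 ω : ℝ) ∂P := by
    have h := integral_sub hXt1int hY1int
    calc ∫ ω, W 0 ω ∂P = ∫ ω, ((Xt 1 ω : ℝ) - (Y 1 ω : ℝ)) ∂P := rfl
      _ = (∫ ω, (Xt 1 ω : ℝ) ∂P) - ∫ ω, (Y 1 ω : ℝ) ∂P := h
      _ = p.toReal * (∫ ω, (X 0 ω : ℝ) ∂P) - ∫ ω, (Y 0 ω : ℝ) ∂P := by
          rw [hXt1mean, hY1mean]
  have hc : (0 : ℝ) < ∫ ω, W 0 ω ∂P := by rw [hWmean]; exact hf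
  -- strong law of large numbers
  have hslln := strong_law_ae_real W hWint hindepW hident
  filter_upwards [hslln] with ω hω
  -- the partial sums tend to infinity
  have hS : Tendsto (fun k : ℕ => ∑ i ∈ Finset.range k, W i ω) atTop atTop := by
    have h1 : Tendsto (fun k : ℕ => ((∑ i ∈ Finset.range k, W i ω) / k) * k) atTop atTop :=
      Tendsto.pos_mul_atTop hc hω tendsto_natCast_atTop_atTop
    refine h1.congr' ?_
    filter_upwards [eventually_gt_atTop 0] with k hk
    rw [div_mul_cancel₀]
    exact Nat.cast_ne_zero.mpr hk.ne'
  set T : ℕ → ℤ := fun k => ∑ i ∈ Finset.range k, ((Xt (i + 1) ω : ℤ) - (Y (i + 1) ω : ℤ))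
    with hTdef
  have hcast : ∀ k, ((T k : ℤ) : ℝ) = ∑ i ∈ Finset.range k, W i ω := by
    intro k
    simp only [hTdef, hWdef]
    push_cast
    rfl
  have hT : Tendsto T atTop atTop := by
    rw [tendsto_atTop_atTop]
    intro b
    obtain ⟨N, hN⟩ := eventually_atTop.mp (tendsto_atTop.mp hS (b : ℝ))
    exact ⟨N, fun k hk => by have := hN k hk; rw [← hcast k] at this; exact_mod_cast this⟩
  have hZT : ∀ k, T k ≤ Z (2 * k) ω := by
    intro k
    induction k with
    | zero => simp [hTdef, hZ0]
    | succ k ih =>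
      have h1 : Z (2 * (k + 1)) ω = max 0 (Z (2 * k) ω + (Xt (k + 1) ω : ℤ) - (Y (k + 1) ω : ℤ)) := by
        have h2 := hZeven k ω
        have h3 := hZodd k ω
        have h4 : 2 * (k + 1) = 2 * k + 2 := by ring
        rw [h4, h2, h3]
      have h5 : T (k + 1) = T k + ((Xt (k + 1) ω : ℤ) - (Y (k + 1) ω : ℤ)) :=
        Finset.sum_range_succ _ k
      rw [h1, h5]
      have h6 : T k + ((Xt (k + 1) ω : ℤ) - (Y (k + 1) ω : ℤ))
          ≤ Z (2 * k) ω + (Xt (k + 1) ω : ℤ) - (Y (k + 1) ω : ℤ) := by omega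
      exact le_trans h6 (le_max_right _ _)
  have hZn : ∀ n, T (n / 2) ≤ Z n ω := by
    intro n
    rcases Nat.even_or_odd n with he | ho
    · obtain ⟨k, hk⟩ := he
      have h2 : n / 2 = k := by omega
      rw [h2, show n = 2 * k by omega]
      exact hZT k
    · obtain ⟨k, hk⟩ := ho
      have h2 : n / 2 = k := by omega
      rw [h2, hk, hZodd k ω]
      exact le_trans (hZT k) (le_add_of_nonneg_right (Int.natCast_nonneg _))
  rw [tendsto_atTop_atTop]
  intro b
  obtain ⟨N, hN⟩ := tendsto_atTop_atTop.mp hT b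
  exact ⟨2 * N, fun n hn => le_trans (hN (n / 2) (by omega)) (hZn n)⟩
end

section
/- In the fitness model with E[X - Y] ∈ (0, ∞) and i.i.d. fitness values with law μ on [0,1], almost surely Z_n / n → E[X - Y]/2 as n → ∞, and for every left interval I = [0,f], almost surely Z_n(I)/n → max(E[μ(I)X - Y], 0)/2. -/
open MeasureTheory ProbabilityTheory Filter
open Finset Topology

set_option maxHeartbeats 1600000

lemma fm_min_div (a : ℕ → ℝ) (h0 : a 0 = 0) (m : ℝ)
    (h : Tendsto (fun k : ℕ => a k / k) atTop (𝓝 m)) :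
    Tendsto (fun k : ℕ => (Finset.range (k+1)).inf' (by simp) a / k) atTop (𝓝 (min m 0)) := by
  rw [Metric.tendsto_atTop] at h ⊢
  intro ε hε
  obtain ⟨N₀, hN₀⟩ := h (ε/2) (by linarith)
  set C : ℝ := (Finset.range (N₀+1)).sup' (by simp) (fun j => |a j|) with hC
  obtain ⟨K, hK⟩ := exists_nat_gt (max (2*C/ε) (N₀ + 1))
  refine ⟨K + 1, fun k hk => ?_⟩
  have hkpos : (0:ℝ) < k := by
    have : 1 ≤ k := le_trans (by omega) hk
    exact_mod_cast Nat.lt_of_lt_of_le Nat.zero_lt_one this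
  have hkK : (max (2*C/ε) (N₀+1) : ℝ) < k := lt_of_lt_of_le hK (by exact_mod_cast Nat.le_of_succ_le hk)
  have hkN₀ : N₀ ≤ k := by
    have h1 : (N₀:ℝ) + 1 ≤ k := le_of_lt (lt_of_le_of_lt (le_max_right _ _) hkK)
    have h2 : ((N₀ + 1 : ℕ) : ℝ) ≤ (k:ℕ) := by push_cast; linarith
    have h3 : N₀ + 1 ≤ k := by exact_mod_cast h2
    omega
  -- bounds on a j for j ≥ N₀, j ≤ k
  have hub : ∀ j, N₀ ≤ j → a j ≤ (m + ε/2) * j := by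
    intro j hj
    rcases Nat.eq_zero_or_pos j with rfl | hjpos
    · simp [h0]
    · have := hN₀ j hj
      rw [Real.dist_eq, abs_lt] at this
      have hjpos' : (0:ℝ) < j := by exact_mod_cast hjpos
      have h2 : a j / j ≤ m + ε/2 := by linarith [this.2]
      calc a j = (a j / j) * j := by field_simp
        _ ≤ (m + ε/2) * j := mul_le_mul_of_nonneg_right h2 (le_of_lt hjpos')
  have hlb : ∀ j, N₀ ≤ j → (m - ε/2) * j ≤ a j := by
    intro j hj
    rcases Nat.eq_zero_or_pos j with rfl | hjpos
    · simp [h0]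
    · have := hN₀ j hj
      rw [Real.dist_eq, abs_lt] at this
      have hjpos' : (0:ℝ) < j := by exact_mod_cast hjpos
      have h2 : m - ε/2 ≤ a j / j := by linarith [this.1]
      calc (m - ε/2) * j ≤ (a j / j) * j := mul_le_mul_of_nonneg_right h2 (le_of_lt hjpos')
        _ = a j := by field_simp
  set I : ℝ := (Finset.range (k+1)).inf' (by simp) a with hI
  -- upper bound on I
  have hIub : I ≤ (min m 0 + ε/2) * k := by
    rcases le_total m 0 with hm | hm
    · calc I ≤ a k := Finset.inf'_le _ (by simp)
        _ ≤ (m + ε/2) * k := hub k hkN₀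
        _ = (min m 0 + ε/2) * k := by rw [min_eq_left hm]
    · calc I ≤ a 0 := Finset.inf'_le _ (by simp)
        _ = 0 := h0
        _ ≤ (min m 0 + ε/2) * k := by
            rw [min_eq_right hm]; positivity
  -- lower bound on I
  have hIlb : (min m 0 - ε/2) * k ≤ I := by
    rw [hI, Finset.le_inf'_iff]
    intro j hj
    have hjk : j ≤ k := by simpa using Nat.lt_succ_iff.mp (Finset.mem_range.mp hj)
    rcases le_or_gt j N₀ with hjN | hjN
    · have h1 : -C ≤ a j := by
        have : |a j| ≤ C := Finset.le_sup' (fun j => |a j|) (Finset.mem_range.mpr (by omega))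
        linarith [neg_abs_le (a j), neg_le_neg this]
      have h2 : (min m 0 - ε/2) * k ≤ -C := by
        have hC2 : 2*C/ε < k := lt_of_le_of_lt (le_max_left _ _) hkK
        have hCk : 2*C < ε * k := by
          rw [div_lt_iff₀ hε] at hC2; linarith [hC2]
        have hmin : min m 0 ≤ 0 := min_le_right _ _
        nlinarith [mul_nonneg (neg_nonneg.mpr hmin) (le_of_lt hkpos)]
      linarith
    · have := hlb j (le_of_lt hjN)
      have hjr : (j:ℝ) ≤ k := by exact_mod_cast hjk
      have hjnn : (0:ℝ) ≤ j := by positivity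
      rcases le_total (m - ε/2) 0 with hc | hc
      · have : (m - ε/2) * k ≤ (m - ε/2) * j := by nlinarith
        have hm' : min m 0 - ε/2 ≤ m - ε/2 := by
          have := min_le_left m 0; linarith
        nlinarith
      · have h1 : (0:ℝ) ≤ a j := le_trans (by nlinarith) this
        have : (min m 0 - ε/2) * k ≤ 0 := by
          have hmin : min m 0 ≤ 0 := min_le_right _ _
          nlinarith
        linarith
  have hup : I / k ≤ min m 0 + ε/2 := by
    rw [div_le_iff₀ hkpos]; linarith [hIub]
  have hlo : min m 0 - ε/2 ≤ I / k := by
    rw [le_div_iff₀ hkpos]; linarith [hIlb]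
  rw [Real.dist_eq, abs_lt]
  constructor <;> linarith

lemma fm_lindley_eq (ξ W : ℕ → ℝ) (h0 : W 0 = 0)
    (hrec : ∀ k, W (k+1) = max 0 (W k + ξ (k+1))) (k : ℕ) :
    W k = (∑ i ∈ Finset.range k, ξ (i+1))
      - (Finset.range (k+1)).inf' (by simp) (fun j => ∑ i ∈ Finset.range j, ξ (i+1)) := by
  induction k with
  | zero => simp [h0]
  | succ k ih =>
    have hmax : ∀ a b : ℝ, max 0 (a - b) = a - min a b := by
      intro a b
      rcases le_total a b with h | h
      · rw [min_eq_left h, max_eq_left (by linarith), sub_self]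
      · rw [min_eq_right h, max_eq_right (by linarith)]
    set S : ℕ → ℝ := fun j => ∑ i ∈ Finset.range j, ξ (i+1) with hS
    have hSk : S (k+1) = S k + ξ (k+1) := Finset.sum_range_succ _ _
    rw [hrec k, ih]
    simp only [Finset.range_add_one (n := k+1)]
    rw [Finset.inf'_insert (H := Finset.nonempty_range_iff.mpr (Nat.succ_ne_zero k)), hSk]
    generalize (Finset.range (k+1)).inf' (by simp) S = I
    rw [show S k - I + ξ (k+1) = (S k + ξ (k+1)) - I by ring, hmax]
    rw [min_comm]
    rw [show (∑ i ∈ Finset.range (k+1), ξ (i+1)) = S k + ξ (k+1) from hSk]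

lemma fm_lindley_tendsto (ξ W : ℕ → ℝ) (h0 : W 0 = 0)
    (hrec : ∀ k, W (k+1) = max 0 (W k + ξ (k+1))) (m : ℝ)
    (hS : Tendsto (fun k : ℕ => (∑ i ∈ Finset.range k, ξ (i+1)) / k) atTop (𝓝 m)) :
    Tendsto (fun k : ℕ => W k / k) atTop (𝓝 (max m 0)) := by
  have hmin := fm_min_div (fun j => ∑ i ∈ Finset.range j, ξ (i+1)) (by simp) m hS
  have h := hS.sub hmin
  have heq : (fun k : ℕ => (∑ i ∈ Finset.range k, ξ (i+1)) / k
      - (Finset.range (k+1)).inf' (by simp) (fun j => ∑ i ∈ Finset.range j, ξ (i+1)) / k)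
      = fun k : ℕ => W k / k := by
    funext k
    rw [fm_lindley_eq ξ W h0 hrec k, sub_div]
  rw [heq] at h
  have : max m 0 = m - min m 0 := by
    rcases le_total m 0 with hm | hm
    · rw [max_eq_right hm, min_eq_left hm]; ring
    · rw [max_eq_left hm, min_eq_right hm]; ring
  rwa [this]

lemma fm_last_div (a : ℕ → ℝ) (m : ℝ)
    (h : Tendsto (fun k : ℕ => (∑ i ∈ Finset.range k, a i) / k) atTop (𝓝 m)) :
    Tendsto (fun k : ℕ => a k / k) atTop (𝓝 0) := by
  have h1 : Tendsto (fun k : ℕ => (1:ℝ)/(k+1)) atTop (𝓝 0) := tendsto_one_div_add_atTop_nhds_zero_nat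
  have hsucc : Tendsto (fun k : ℕ => (∑ i ∈ Finset.range (k+1), a i) / ((k:ℝ)+1)) atTop (𝓝 m) := by
    have h3 := h.comp (tendsto_add_atTop_nat 1)
    refine h3.congr fun k => ?_
    simp only [Function.comp]
    push_cast
    ring_nf
  have hprev : Tendsto (fun k : ℕ => (∑ i ∈ Finset.range k, a i) / ((k:ℝ)+1)) atTop (𝓝 m) := by
    have h2 : Tendsto (fun k : ℕ => (k:ℝ)/(k+1)) atTop (𝓝 1) := by
      have heq : (fun k : ℕ => (k:ℝ)/(k+1)) = fun k : ℕ => 1 - 1/((k:ℝ)+1) := by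
        funext k
        have : (k:ℝ)+1 ≠ 0 := by positivity
        field_simp
        ring
      rw [heq]
      simpa using (tendsto_const_nhds (x := (1:ℝ))).sub h1
    have := h.mul h2
    rw [mul_one] at this
    refine this.congr fun k => ?_
    rcases Nat.eq_zero_or_pos k with rfl | hk
    · simp
    · have hk' : (k:ℝ) ≠ 0 := by positivity
      field_simp
  have hd : Tendsto (fun k : ℕ => a k / (k+1)) atTop (𝓝 0) := by
    have := hsucc.sub hprev
    rw [sub_self] at this
    refine this.congr fun k => ?_
    rw [Finset.sum_range_succ, ← sub_div]
    ring_nf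
  have h2 : Tendsto (fun k : ℕ => ((k:ℝ)+1)/k) atTop (𝓝 1) := by
    have heq : ∀ᶠ k : ℕ in atTop, 1 + 1/(k:ℝ) = ((k:ℝ)+1)/k := by
      filter_upwards [eventually_ge_atTop 1] with k hk
      have : (k:ℝ) ≠ 0 := by positivity
      field_simp
    have : Tendsto (fun k : ℕ => 1 + 1/(k:ℝ)) atTop (𝓝 1) := by
      simpa using (tendsto_const_nhds (x := (1:ℝ))).add tendsto_one_div_atTop_nhds_zero_nat
    exact Tendsto.congr' heq this
  have := hd.mul h2
  rw [zero_mul] at this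
  refine this.congr' ?_
  filter_upwards [eventually_ge_atTop 1] with k hk
  have hk' : (k:ℝ) ≠ 0 := by
    have : (0:ℕ) < k := hk
    positivity
  have hk1 : (k:ℝ) + 1 ≠ 0 := by positivity
  field_simp

lemma fm_even_odd (g : ℕ → ℝ) (L : ℝ)
    (he : Tendsto (fun k : ℕ => g (2*k)) atTop (𝓝 L))
    (ho : Tendsto (fun k : ℕ => g (2*k+1)) atTop (𝓝 L)) :
    Tendsto g atTop (𝓝 L) := by
  rw [Metric.tendsto_atTop] at he ho ⊢
  intro ε hε
  obtain ⟨N₁, hN₁⟩ := he ε hε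
  obtain ⟨N₂, hN₂⟩ := ho ε hε
  refine ⟨2 * max N₁ N₂ + 1, fun n hn => ?_⟩
  rcases Nat.even_or_odd n with ⟨k, hk⟩ | ⟨k, hk⟩
  · have : n = 2 * k := by omega
    subst this
    exact hN₁ k (by omega)
  · subst hk
    exact hN₂ k (by omega)

lemma fm_assemble (Z W A : ℕ → ℝ) (L : ℝ)
    (hZe : ∀ k, Z (2*k) = W k) (hZo : ∀ k, Z (2*k+1) = W k + A k)
    (hW : Tendsto (fun k : ℕ => W k / k) atTop (𝓝 L))
    (hA : Tendsto (fun k : ℕ => A k / k) atTop (𝓝 0)) :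
    Tendsto (fun n : ℕ => Z n / n) atTop (𝓝 (L/2)) := by
  apply fm_even_odd
  · have : Tendsto (fun k : ℕ => (W k / k)/2) atTop (𝓝 (L/2)) := hW.div_const 2
    refine this.congr fun k => ?_
    rcases Nat.eq_zero_or_pos k with rfl | hk
    · simp [hZe 0]
    · rw [hZe k]
      push_cast
      rw [div_div, mul_comm]
  · have h2 : Tendsto (fun k : ℕ => (k:ℝ)/(2*k+1)) atTop (𝓝 (1/2)) := by
      have heq : ∀ᶠ k : ℕ in atTop, 1/(2 + 1/(k:ℝ)) = (k:ℝ)/(2*k+1) := by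
        filter_upwards [eventually_ge_atTop 1] with k hk
        have hk' : (k:ℝ) ≠ 0 := by
          have : (0:ℕ) < k := hk
          positivity
        rw [div_eq_div_iff (by positivity) (by positivity)]
        field_simp
      have hden : Tendsto (fun k : ℕ => 2 + 1/(k:ℝ)) atTop (𝓝 2) := by
        simpa using (tendsto_const_nhds (x := (2:ℝ))).add tendsto_one_div_atTop_nhds_zero_nat
      have := (tendsto_const_nhds (x := (1:ℝ))).div hden (by norm_num)
      exact this.congr' heq
    have := (hW.add hA).mul h2
    simp only [add_zero] at this
    have hL : L * (1/2) = L/2 := by ring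
    rw [hL] at this
    refine this.congr' ?_
    filter_upwards [eventually_ge_atTop 1] with k hk
    have hk' : (k:ℝ) ≠ 0 := by
      have : (0:ℕ) < k := hk
      positivity
    have h21 : (2:ℝ)*k+1 ≠ 0 := by positivity
    rw [hZo k]
    push_cast
    field_simp


lemma fm_main_aux {Ω : Type*} [MeasurableSpace Ω] {P : Measure Ω}
    (A B : ℕ → Ω → ℝ) (m : ℝ)
    (hS : ∀ᵐ ω ∂P, Tendsto (fun k : ℕ => (∑ i ∈ Finset.range k, (A (i+1) ω - B (i+1) ω)) / k)
      atTop (𝓝 m))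
    (hA0 : ∀ᵐ ω ∂P, Tendsto (fun k : ℕ => A (k+1) ω / k) atTop (𝓝 0))
    (Z : ℕ → Ω → ℝ) (hZ0 : ∀ ω, Z 0 ω = 0)
    (hZodd : ∀ k ω, Z (2*k+1) ω = Z (2*k) ω + A (k+1) ω)
    (hZeven : ∀ k ω, Z (2*k+2) ω = max 0 (Z (2*k+1) ω - B (k+1) ω)) :
    ∀ᵐ ω ∂P, Tendsto (fun n : ℕ => Z n ω / n) atTop (𝓝 (max m 0 / 2)) := by
  filter_upwards [hS, hA0] with ω hSω hAω
  have hrec : ∀ k, Z (2*(k+1)) ω = max 0 (Z (2*k) ω + (A (k+1) ω - B (k+1) ω)) := by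
    intro k
    have h1 : 2*(k+1) = 2*k+2 := by ring
    rw [h1, hZeven, hZodd]
    congr 1
    ring
  have hW := fm_lindley_tendsto (fun k => A k ω - B k ω) (fun k => Z (2*k) ω)
    (by simpa using hZ0 ω) hrec m hSω
  exact fm_assemble (fun n => Z n ω) (fun k => Z (2*k) ω) (fun k => A (k+1) ω) _
    (fun k => rfl) (fun k => hZodd k ω) hW hAω

lemma fm_indep_mono {Ω : Type*} {mΩ : MeasurableSpace Ω} {P : Measure Ω}
    {m1 m2 m1' m2' : MeasurableSpace Ω} (h : Indep m1 m2 P) (h1 : m1' ≤ m1) (h2 : m2' ≤ m2) :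
    Indep m1' m2' P := by
  rw [Indep_iff] at h ⊢
  exact fun t1 t2 ht1 ht2 => h t1 t2 (h1 _ ht1) (h2 _ ht2)

lemma fm_indepFun_of_indep {Ω β γ : Type*} {mΩ : MeasurableSpace Ω} {P : Measure Ω}
    [mβ : MeasurableSpace β] [mγ : MeasurableSpace γ]
    {m1 m2 : MeasurableSpace Ω} (h : Indep m1 m2 P)
    {φ : Ω → β} {ψ : Ω → γ} (hφ : Measurable[m1] φ) (hψ : Measurable[m2] ψ) :
    IndepFun φ ψ P := by
  rw [IndepFun_iff_Indep]
  exact fm_indep_mono h hφ.comap_le hψ.comap_le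

lemma fm_measurable_cardLe (f : ℝ) :
    Measurable (fun q : ℕ × (ℕ → ℝ) => ((Finset.range q.1).filter (fun i => q.2 i ≤ f)).card) := by
  have h : Measurable (fun q : (ℕ → ℝ) × ℕ =>
      ((Finset.range q.2).filter (fun i => q.1 i ≤ f)).card) := by
    apply measurable_from_prod_countable_left
    intro y
    have heq : (fun u : ℕ → ℝ => ((Finset.range y).filter (fun i => u i ≤ f)).card)
        = fun u : ℕ → ℝ => ∑ i ∈ Finset.range y, if u i ≤ f then 1 else 0 := by
      funext u; rw [Finset.card_filter]
    rw [heq]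
    apply Finset.measurable_sum
    intro i _
    exact Measurable.ite ((measurable_pi_apply i) measurableSet_Iic)
      measurable_const measurable_const
  exact h.comp measurable_swap

lemma fm_measurable_cardLeFin (f : ℝ) (x : ℕ) :
    Measurable (fun u : Fin x → ℝ => (Finset.univ.filter (fun i => u i ≤ f)).card) := by
  have heq : (fun u : Fin x → ℝ => (Finset.univ.filter (fun i => u i ≤ f)).card)
      = fun u : Fin x → ℝ => ∑ i : Fin x, if u i ≤ f then 1 else 0 := by
    funext u; rw [Finset.card_filter]
  rw [heq]
  apply Finset.measurable_sum
  intro i _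
  exact Measurable.ite ((measurable_pi_apply i) measurableSet_Iic)
    measurable_const measurable_const

lemma fm_measurable_natCast : Measurable (fun n : ℕ => (n:ℝ)) := measurable_from_top

lemma fm_ite_eq_indicator {Ω : Type*} (q : Ω → Prop) [DecidablePred q] :
    (fun ω => if q ω then (1:ℝ) else 0) = Set.indicator {ω | q ω} (fun _ => 1) := by
  funext ω
  by_cases hω : q ω <;> simp [Set.indicator_apply, hω]

lemma fm_integrable_ite {Ω : Type*} [MeasurableSpace Ω] (P : Measure Ω) [IsFiniteMeasure P]
    (q : Ω → Prop) [DecidablePred q] (hA : MeasurableSet {ω | q ω}) :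
    Integrable (fun ω => if q ω then (1:ℝ) else 0) P := by
  rw [fm_ite_eq_indicator]
  exact (integrable_const (1:ℝ)).indicator hA

lemma fm_integral_ite {Ω : Type*} [MeasurableSpace Ω] (P : Measure Ω) [IsFiniteMeasure P]
    (q : Ω → Prop) [DecidablePred q] (hA : MeasurableSet {ω | q ω}) :
    ∫ ω, (if q ω then (1:ℝ) else 0) ∂P = (P {ω | q ω}).toReal := by
  rw [fm_ite_eq_indicator]
  rw [integral_indicator_const (1:ℝ) hA]
  simp
  rfl

def fmEvalR (T : Finset (ℕ ⊕ ℕ × ℕ)) (q : ℕ × ℕ) (h : Sum.inr q ∈ T)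
    (v : ∀ j : T, fitnessModelType j) : ℝ := v ⟨Sum.inr q, h⟩

def fmEvalPair (T : Finset (ℕ ⊕ ℕ × ℕ)) (n : ℕ) (h : Sum.inl n ∈ T)
    (v : ∀ j : T, fitnessModelType j) : ℕ × ℕ := v ⟨Sum.inl n, h⟩

lemma fmEvalR_measurable (T : Finset (ℕ ⊕ ℕ × ℕ)) (q : ℕ × ℕ) (h : Sum.inr q ∈ T) :
    @Measurable _ _ (@MeasurableSpace.pi _ _ (fun j : T => fitnessModelSpace j)) _
      (fmEvalR T q h) := @measurable_pi_apply T _ (fun j : T => fitnessModelSpace j) ⟨Sum.inr q, h⟩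

lemma fmEvalPair_measurable (T : Finset (ℕ ⊕ ℕ × ℕ)) (n : ℕ) (h : Sum.inl n ∈ T) :
    @Measurable _ _ (@MeasurableSpace.pi _ _ (fun j : T => fitnessModelSpace j)) _
      (fmEvalPair T n h) := @measurable_pi_apply T _ (fun j : T => fitnessModelSpace j) ⟨Sum.inl n, h⟩

/-- In the fitness model with `E[X - Y] ∈ (0, ∞)`: almost surely `Zₙ/n → E[X - Y]/2`, and for
every left interval `I = [0, f]`, almost surely `Zₙ(I)/n → max(E[μ(I)X - Y], 0)/2`. -/
theorem stmt19
    {Ω : Type*} [MeasurableSpace Ω] (P : Measure Ω) [IsProbabilityMeasure P]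
    (μ : Measure ℝ) [IsProbabilityMeasure μ] (hμsupp : μ (Set.Icc (0 : ℝ) 1) = 1)
    (X Y : ℕ → Ω → ℕ) (U : ℕ → ℕ → Ω → ℝ)
    (hXm : ∀ n, Measurable (X n)) (hYm : ∀ n, Measurable (Y n))
    (hUm : ∀ n i, Measurable (U n i))
    -- the pairs (Xₙ, Yₙ) and all fitness values Uₙᵢ are jointly independent
    (hindep : iIndepFun (m := fitnessModelSpace) (fitnessModelFam X Y U) P)
    -- the pairs (Xₙ, Yₙ) are identically distributed
    (hid : ∀ n, IdentDistrib (fun ω => (X n ω, Y n ω)) (fun ω => (X 0 ω, Y 0 ω)) P P)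
    -- every fitness value has law μ
    (hU : ∀ n i, P.map (U n i) = μ)
    -- E[X - Y] ∈ (0, ∞)
    (hXint : Integrable (fun ω => (X 0 ω : ℝ)) P)
    (hYint : Integrable (fun ω => (Y 0 ω : ℝ)) P)
    (hXY : 0 < ∫ ω, (X 0 ω : ℝ) ∂P - ∫ ω, (Y 0 ω : ℝ) ∂P)
    -- Zₜₒₜ n = total number of living species at time n
    (Ztot : ℕ → Ω → ℤ)
    (hZtot0 : ∀ ω, Ztot 0 ω = 0)
    (hZtotodd : ∀ k ω, Ztot (2 * k + 1) ω = Ztot (2 * k) ω + (X (k + 1) ω : ℤ))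
    (hZtoteven : ∀ k ω, Ztot (2 * k + 2) ω = max 0 (Ztot (2 * k + 1) ω - (Y (k + 1) ω : ℤ)))
    -- number of species created at stage n with fitness ≤ f
    (Xt : ℝ → ℕ → Ω → ℕ)
    (hXt : ∀ f n ω, Xt f n ω = ((Finset.range (X n ω)).filter (fun i => U n i ω ≤ f)).card)
    -- ZI f n = Z_n([0,f]), the number of living species with fitness in [0,f] at time n
    (ZI : ℝ → ℕ → Ω → ℤ)
    (hZI0 : ∀ f ω, ZI f 0 ω = 0)
    (hZIodd : ∀ f k ω, ZI f (2 * k + 1) ω = ZI f (2 * k) ω + (Xt f (k + 1) ω : ℤ))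
    (hZIeven : ∀ f k ω,
      ZI f (2 * k + 2) ω = max 0 (ZI f (2 * k + 1) ω - (Y (k + 1) ω : ℤ))) :
    (∀ᵐ ω ∂P, Tendsto (fun n : ℕ => (Ztot n ω : ℝ) / n) atTop
        (nhds ((∫ ω, (X 0 ω : ℝ) ∂P - ∫ ω, (Y 0 ω : ℝ) ∂P) / 2))) ∧
      ∀ f : ℝ, ∀ᵐ ω ∂P, Tendsto (fun n : ℕ => (ZI f n ω : ℝ) / n) atTop
        (nhds (max ((μ (Set.Iic f)).toReal * ∫ ω, (X 0 ω : ℝ) ∂P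
          - ∫ ω, (Y 0 ω : ℝ) ∂P) 0 / 2)) := by
  classical
  letI fmInst : ∀ j : ℕ ⊕ ℕ × ℕ, MeasurableSpace (fitnessModelType j) := fitnessModelSpace
  have castm1 : Measurable (fun p : ℕ × ℕ => (p.1:ℝ)) := fm_measurable_natCast.comp measurable_fst
  have castm : Measurable (fun p : ℕ × ℕ => ((p.1:ℝ) - (p.2:ℝ))) :=
    castm1.sub (fm_measurable_natCast.comp measurable_snd)
  set EX := ∫ ω, (X 0 ω : ℝ) ∂P with hEX
  set EY := ∫ ω, (Y 0 ω : ℝ) ∂P with hEY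
  have hXid : ∀ n, IdentDistrib (fun ω => (X n ω:ℝ)) (fun ω => (X 0 ω:ℝ)) P P :=
    fun n => (hid n).comp castm1
  -- pairwise independence of the (X,Y) pairs
  have hpairindep : ∀ n m : ℕ, n ≠ m →
      IndepFun (fun ω => (X n ω, Y n ω)) (fun ω => (X m ω, Y m ω)) P := by
    intro n m hnm
    have h := hindep.indepFun (i := Sum.inl n) (j := Sum.inl m) (by simpa using hnm)
    exact h
  -- SLLN for X alone
  have hintX1 : Integrable (fun ω => (X 1 ω : ℝ)) P := (hXid 1).integrable_iff.mpr hXint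
  have hsllnX : ∀ᵐ ω ∂P, Tendsto (fun k : ℕ => (∑ i ∈ Finset.range k, (X (i+1) ω : ℝ)) / k)
      atTop (𝓝 EX) := by
    have h := strong_law_ae_real (fun n ω => (X (n+1) ω : ℝ)) hintX1
      (fun n m hnm => (hpairindep (n+1) (m+1) (by omega)).comp castm1 castm1)
      (fun i => (hXid (i+1)).trans (hXid 1).symm)
    have he : ∫ ω, (X 1 ω : ℝ) ∂P = EX := (hXid 1).integral_eq
    simpa [he] using h
  have hA0X : ∀ᵐ ω ∂P, Tendsto (fun k : ℕ => (X (k+1) ω : ℝ) / k) atTop (𝓝 0) :=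
    hsllnX.mono fun ω h => fm_last_div (fun i => (X (i+1) ω:ℝ)) EX h
  -- SLLN for X - Y
  have hDid : ∀ n, IdentDistrib (fun ω => (X n ω:ℝ) - (Y n ω:ℝ))
      (fun ω => (X 0 ω:ℝ) - (Y 0 ω:ℝ)) P P := fun n => (hid n).comp castm
  have hintD1 : Integrable (fun ω => (X 1 ω : ℝ) - (Y 1 ω:ℝ)) P :=
    (hDid 1).integrable_iff.mpr (hXint.sub hYint)
  have hsllnD : ∀ᵐ ω ∂P, Tendsto
      (fun k : ℕ => (∑ i ∈ Finset.range k, ((X (i+1) ω : ℝ) - (Y (i+1) ω : ℝ))) / k)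
      atTop (𝓝 (EX - EY)) := by
    have h := strong_law_ae_real (fun n ω => (X (n+1) ω : ℝ) - (Y (n+1) ω : ℝ)) hintD1
      (fun n m hnm => (hpairindep (n+1) (m+1) (by omega)).comp castm castm)
      (fun i => (hDid (i+1)).trans (hDid 1).symm)
    have he : ∫ ω, ((X 1 ω : ℝ) - (Y 1 ω : ℝ)) ∂P = EX - EY := by
      rw [(hDid 1).integral_eq]
      exact integral_sub hXint hYint
    simpa [he] using h
  constructor
  · have hmain := fm_main_aux (P := P) (fun n ω => (X n ω:ℝ)) (fun n ω => (Y n ω:ℝ)) (EX - EY)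
      hsllnD hA0X (fun n ω => ((Ztot n ω : ℤ) : ℝ))
      (fun ω => by show ((Ztot 0 ω : ℤ) : ℝ) = 0; rw [hZtot0]; simp)
      (fun k ω => by
        show ((Ztot (2*k+1) ω : ℤ):ℝ) = ((Ztot (2*k) ω : ℤ):ℝ) + ((X (k+1) ω : ℕ):ℝ)
        rw [hZtotodd]; push_cast; ring)
      (fun k ω => by
        show ((Ztot (2*k+2) ω : ℤ):ℝ) = max 0 (((Ztot (2*k+1) ω : ℤ):ℝ) - ((Y (k+1) ω : ℕ):ℝ))
        rw [hZtoteven]; push_cast; ring_nf)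
    rw [max_eq_left hXY.le] at hmain
    exact hmain
  · intro f
    have hIicm : MeasurableSet (Set.Iic f) := measurableSet_Iic
    set p : ℝ := (μ (Set.Iic f)).toReal with hp
    have hfammeas : ∀ j, @Measurable Ω (fitnessModelType j) _ (fitnessModelSpace j)
        (fitnessModelFam X Y U j) := by
      intro j
      cases j with
      | inl k => exact (hXm k).prodMk (hYm k)
      | inr q => exact hUm q.1 q.2
    have hXtle : ∀ n ω, Xt f n ω ≤ X n ω := by
      intro n ω
      rw [hXt]
      exact le_trans (Finset.card_filter_le _ _) (le_of_eq (Finset.card_range _))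
    have hXtm : ∀ n, Measurable (Xt f n) := by
      intro n
      have heq : Xt f n = (fun q : ℕ × (ℕ → ℝ) =>
          ((Finset.range q.1).filter (fun i => q.2 i ≤ f)).card) ∘
          (fun ω => (X n ω, fun i => U n i ω)) := by
        funext ω
        simp only [Function.comp]
        rw [hXt]
      rw [heq]
      exact (fm_measurable_cardLe f).comp
        ((hXm n).prodMk (measurable_pi_lambda _ (fun i => hUm n i)))
    have hBxm : ∀ n (x : ℕ), Measurable (fun ω =>
        (Finset.univ.filter (fun i : Fin x => U n (i:ℕ) ω ≤ f)).card) :=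
      fun n x => (fm_measurable_cardLeFin f x).comp
        (measurable_pi_lambda _ (fun i : Fin x => hUm n i))
    have hXtBx : ∀ n ω, Xt f n ω
        = (Finset.univ.filter (fun i : Fin (X n ω) => U n (i:ℕ) ω ≤ f)).card := by
      intro n ω
      rw [hXt, Finset.card_filter, Finset.card_filter, ← Fin.sum_univ_eq_sum_range]
    have hVm : ∀ n (x : ℕ), Measurable (fun ω (i : Fin x) => U n (i:ℕ) ω) :=
      fun n x => measurable_pi_lambda _ (fun i => hUm n i)
    -- law of the vector of fitness values
    have hVlaw : ∀ n (x : ℕ), P.map (fun ω (i : Fin x) => U n (i:ℕ) ω)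
        = Measure.pi (fun _ : Fin x => μ) := by
      intro n x
      refine (Measure.pi_eq (μ := fun _ : Fin x => μ) fun s hs => ?_).symm
      rw [Measure.map_apply (hVm n x) (MeasurableSet.univ_pi hs)]
      set s' : ℕ → Set ℝ := fun i => if h : i < x then s ⟨i, h⟩ else Set.univ with hs'def
      have hs'm : ∀ i, MeasurableSet (s' i) := by
        intro i
        simp only [hs'def]
        split
        · exact hs _
        · exact MeasurableSet.univ
      have hs'val : ∀ i : Fin x, s' (i:ℕ) = s i := by
        intro i
        simp only [hs'def, i.2, dif_pos, Fin.eta]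
      set g : (ℕ ⊕ ℕ × ℕ) → Set Ω := fun j =>
        match j with
        | .inl _ => Set.univ
        | .inr q => U q.1 q.2 ⁻¹' s' q.2 with hgdef
      have hgval : ∀ q : ℕ × ℕ, g (Sum.inr q) = U q.1 q.2 ⁻¹' s' q.2 := fun q => rfl
      have hmeas : ∀ j ∈ (Finset.range x).image (fun i => (Sum.inr (n, i) : ℕ ⊕ ℕ × ℕ)),
          MeasurableSet[(fitnessModelSpace j).comap (fitnessModelFam X Y U j)] (g j) := by
        intro j hj
        simp only [Finset.mem_image, Finset.mem_range] at hj
        obtain ⟨i, hi, rfl⟩ := hj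
        exact ⟨s' i, hs'm i, rfl⟩
      have hprod := hindep.meas_biInter hmeas
      have hset : (⋂ j ∈ (Finset.range x).image (fun i => (Sum.inr (n, i) : ℕ ⊕ ℕ × ℕ)), g j)
          = (fun ω (i : Fin x) => U n (i:ℕ) ω) ⁻¹' Set.pi Set.univ s := by
        ext ω
        simp only [Set.mem_iInter, Set.mem_preimage, Set.mem_pi, Set.mem_univ, forall_const,
          Finset.mem_image, Finset.mem_range]
        constructor
        · intro h i
          have := h (Sum.inr (n, (i:ℕ))) ⟨(i:ℕ), i.2, rfl⟩
          rw [hgval, Set.mem_preimage, hs'val] at this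
          exact this
        · rintro h j ⟨i, hi, rfl⟩
          rw [hgval, Set.mem_preimage]
          have := h ⟨i, hi⟩
          rw [← hs'val ⟨i, hi⟩] at this
          exact this
      rw [hset] at hprod
      rw [hprod, Finset.prod_image (fun a _ b _ h => by simpa using h)]
      have hterm : ∀ i ∈ Finset.range x, P (g (Sum.inr (n, i))) = μ (s' i) := by
        intro i _
        rw [hgval, ← hU n i, Measure.map_apply (hUm n i) (hs'm i)]
      rw [Finset.prod_congr rfl hterm, ← Fin.prod_univ_eq_prod_range (fun i => μ (s' i)) x]
      exact Finset.prod_congr rfl fun i _ => by rw [hs'val]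
    -- the count distribution does not depend on the stage
    have hBxid : ∀ n (x a : ℕ),
        P ((fun ω => (Finset.univ.filter (fun i : Fin x => U n (i:ℕ) ω ≤ f)).card) ⁻¹' {a})
        = P ((fun ω => (Finset.univ.filter (fun i : Fin x => U 0 (i:ℕ) ω ≤ f)).card) ⁻¹' {a}) := by
      intro n x a
      have h1 : ∀ m : ℕ,
          ((fun ω => (Finset.univ.filter (fun i : Fin x => U m (i:ℕ) ω ≤ f)).card) ⁻¹' {a})
          = (fun ω (i : Fin x) => U m (i:ℕ) ω) ⁻¹'
            ((fun u : Fin x → ℝ => (Finset.univ.filter (fun i => u i ≤ f)).card) ⁻¹' {a}) := by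
        intro m; rfl
      rw [h1 n, h1 0,
        ← Measure.map_apply (hVm n x) ((fm_measurable_cardLeFin f x) (measurableSet_singleton a)),
        ← Measure.map_apply (hVm 0 x) ((fm_measurable_cardLeFin f x) (measurableSet_singleton a)),
        hVlaw n x, hVlaw 0 x]
    -- independence of the pair (X n, Y n) from the count based on U n
    have hpairBx : ∀ n (x : ℕ), IndepFun (fun ω => (X n ω, Y n ω))
        (fun ω => (Finset.univ.filter (fun i : Fin x => U n (i:ℕ) ω ≤ f)).card) P := by
      intro n x
      have hST : Disjoint ({Sum.inl n} : Finset (ℕ ⊕ ℕ × ℕ))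
          ((Finset.range x).image (fun i => Sum.inr (n, i))) := by
        simp [Finset.disjoint_left]
      have h := hindep.indepFun_finset {Sum.inl n}
        ((Finset.range x).image (fun i => Sum.inr (n, i))) hST hfammeas
      have hφ : Measurable (fmEvalPair {Sum.inl n} n (Finset.mem_singleton_self _)) :=
        fmEvalPair_measurable _ _ _
      have hmemT : ∀ i : Fin x, (Sum.inr (n, (i:ℕ)) : ℕ ⊕ ℕ × ℕ)
          ∈ (Finset.range x).image (fun i => (Sum.inr (n, i) : ℕ ⊕ ℕ × ℕ)) :=
        fun i => Finset.mem_image.mpr ⟨(i:ℕ), Finset.mem_range.mpr i.2, rfl⟩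
      have hψ : Measurable (fun v : (∀ j : ((Finset.range x).image
            (fun i => (Sum.inr (n, i) : ℕ ⊕ ℕ × ℕ)) : Finset (ℕ ⊕ ℕ × ℕ)), fitnessModelType j) =>
          (Finset.univ.filter (fun i : Fin x =>
            fmEvalR _ (n, (i:ℕ)) (hmemT i) v ≤ f)).card) :=
        (fm_measurable_cardLeFin f x).comp
          (measurable_pi_lambda _ (fun i => fmEvalR_measurable _ _ _))
      exact h.comp hφ hψ
    -- distribution of the pair (Xt f n, Y n) at singletons
    have hpairTm : ∀ n, Measurable (fun ω => (Xt f n ω, Y n ω)) :=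
      fun n => (hXtm n).prodMk (hYm n)
    have hsing : ∀ n (a b : ℕ), P {ω | Xt f n ω = a ∧ Y n ω = b}
        = ∑' x : ℕ, (P.map (fun ω => (X 0 ω, Y 0 ω)) {(x, b)})
            * P ((fun ω => (Finset.univ.filter (fun i : Fin x => U 0 (i:ℕ) ω ≤ f)).card) ⁻¹' {a}) := by
      intro n a b
      have hdec : {ω | Xt f n ω = a ∧ Y n ω = b} = ⋃ x : ℕ,
          ((fun ω => (X n ω, Y n ω)) ⁻¹' {(x, b)} ∩
           ((fun ω => (Finset.univ.filter (fun i : Fin x => U n (i:ℕ) ω ≤ f)).card) ⁻¹' {a})) := by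
        ext ω
        simp only [Set.mem_setOf_eq, Set.mem_iUnion, Set.mem_inter_iff, Set.mem_preimage,
          Set.mem_singleton_iff, Prod.mk.injEq]
        constructor
        · rintro ⟨hXt1, hY⟩
          exact ⟨X n ω, ⟨rfl, hY⟩, by rw [← hXtBx n ω]; exact hXt1⟩
        · rintro ⟨x, ⟨hx, hY⟩, hB⟩
          refine ⟨?_, hY⟩
          rw [hXtBx n ω]
          subst hx
          exact hB
      have hdisj : Pairwise (Function.onFun Disjoint (fun x : ℕ =>
          ((fun ω => (X n ω, Y n ω)) ⁻¹' {(x, b)} ∩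
           ((fun ω => (Finset.univ.filter (fun i : Fin x => U n (i:ℕ) ω ≤ f)).card) ⁻¹' {a})))) := by
        intro x y hxy
        simp only [Function.onFun]
        rw [Set.disjoint_left]
        rintro ω ⟨h1, _⟩ ⟨h2, _⟩
        rw [Set.mem_preimage, Set.mem_singleton_iff, Prod.mk.injEq] at h1 h2
        exact hxy (h1.1.symm.trans h2.1)
      have hmeasx : ∀ x : ℕ, MeasurableSet
          ((fun ω => (X n ω, Y n ω)) ⁻¹' {(x, b)} ∩
           ((fun ω => (Finset.univ.filter (fun i : Fin x => U n (i:ℕ) ω ≤ f)).card) ⁻¹' {a})) := by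
        intro x
        exact (((hXm n).prodMk (hYm n)) (measurableSet_singleton _)).inter
          ((hBxm n x) (measurableSet_singleton a))
      rw [hdec, measure_iUnion hdisj hmeasx]
      refine tsum_congr fun x => ?_
      rw [(hpairBx n x).meas_inter ⟨{((x:ℕ), b)}, measurableSet_singleton _, rfl⟩
        ⟨{a}, measurableSet_singleton _, rfl⟩]
      congr 1
      · rw [← Measure.map_apply ((hXm n).prodMk (hYm n)) (measurableSet_singleton _),
          (hid n).map_eq]
      · exact hBxid n x a
    have hlawT : ∀ n, P.map (fun ω => (Xt f n ω, Y n ω)) = P.map (fun ω => (Xt f 1 ω, Y 1 ω)) := by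
      intro n
      refine Measure.ext_iff_singleton.mpr fun c => ?_
      rcases c with ⟨a, b⟩
      rw [Measure.map_apply (hpairTm n) (measurableSet_singleton _),
          Measure.map_apply (hpairTm 1) (measurableSet_singleton _)]
      have hpre : ∀ m : ℕ, (fun ω => (Xt f m ω, Y m ω)) ⁻¹' {(a, b)}
          = {ω | Xt f m ω = a ∧ Y m ω = b} := by
        intro m; ext ω; simp [Prod.ext_iff]
      rw [hpre n, hpre 1, hsing n a b, hsing 1 a b]
    have hTid : ∀ n, IdentDistrib (fun ω => (Xt f n ω, Y n ω)) (fun ω => (Xt f 1 ω, Y 1 ω)) P P :=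
      fun n => ⟨(hpairTm n).aemeasurable, (hpairTm 1).aemeasurable, hlawT n⟩
    -- independence of the increments across stages
    have hindep2 : ∀ n m : ℕ, n ≠ m → IndepFun
        (fun ω => (Xt f (n+1) ω : ℝ) - (Y (n+1) ω : ℝ))
        (fun ω => (Xt f (m+1) ω : ℝ) - (Y (m+1) ω : ℝ)) P := by
      intro n m hnm
      set msp : (ℕ ⊕ ℕ × ℕ) → MeasurableSpace Ω :=
        fun j => (fitnessModelSpace j).comap (fitnessModelFam X Y U j) with hmspdef
      have h_le : ∀ j, msp j ≤ ‹MeasurableSpace Ω› := fun j => (hfammeas j).comap_le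
      have hSset : ∀ r : ℕ, Measurable[⨆ j ∈ ({Sum.inl r} ∪ Set.range (fun i => Sum.inr (r, i))
          : Set (ℕ ⊕ ℕ × ℕ)), msp j] (fun ω => (Xt f r ω : ℝ) - (Y r ω : ℝ)) := by
        intro r
        have hfst : Measurable[⨆ j ∈ ({Sum.inl r} ∪ Set.range (fun i => Sum.inr (r, i))
            : Set (ℕ ⊕ ℕ × ℕ)), msp j] (fun ω => (X r ω, Y r ω)) := by
          have h1 : @Measurable Ω (fitnessModelType (Sum.inl r)) (msp (Sum.inl r))
              (fitnessModelSpace (Sum.inl r)) (fitnessModelFam X Y U (Sum.inl r)) :=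
            Measurable.of_comap_le le_rfl
          exact h1.mono (le_biSup msp (by simp)) le_rfl
        have hsnd : Measurable[⨆ j ∈ ({Sum.inl r} ∪ Set.range (fun i => Sum.inr (r, i))
            : Set (ℕ ⊕ ℕ × ℕ)), msp j] (fun ω (i : ℕ) => U r i ω) := by
          letI : MeasurableSpace Ω := ⨆ j ∈ ({Sum.inl r} ∪ Set.range (fun i => Sum.inr (r, i))
            : Set (ℕ ⊕ ℕ × ℕ)), msp j
          apply measurable_pi_lambda
          intro i
          have h1 : @Measurable Ω (fitnessModelType (Sum.inr (r, i))) (msp (Sum.inr (r, i)))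
              (fitnessModelSpace (Sum.inr (r, i))) (fitnessModelFam X Y U (Sum.inr (r, i))) :=
            Measurable.of_comap_le le_rfl
          exact h1.mono (le_biSup msp (by simp)) le_rfl
        have heq : (fun ω => (Xt f r ω : ℝ) - (Y r ω : ℝ)) = (fun q : (ℕ × ℕ) × (ℕ → ℝ) =>
            ((((Finset.range q.1.1).filter (fun i => q.2 i ≤ f)).card : ℝ) - (q.1.2 : ℝ))) ∘
            (fun ω => ((X r ω, Y r ω), fun i => U r i ω)) := by
          funext ω
          simp only [Function.comp]
          rw [hXt]
        rw [heq]
        have hg2 : Measurable (fun q : (ℕ × ℕ) × (ℕ → ℝ) =>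
            ((((Finset.range q.1.1).filter (fun i => q.2 i ≤ f)).card : ℝ) - (q.1.2 : ℝ))) := by
          apply Measurable.sub
          · exact fm_measurable_natCast.comp ((fm_measurable_cardLe f).comp
              ((measurable_fst.fst).prodMk measurable_snd))
          · exact fm_measurable_natCast.comp (measurable_fst.snd)
        exact hg2.comp (hfst.prodMk hsnd)
      have hdisjS : Disjoint
          ({Sum.inl (n+1)} ∪ Set.range (fun i => Sum.inr (n+1, i)) : Set (ℕ ⊕ ℕ × ℕ))
          ({Sum.inl (m+1)} ∪ Set.range (fun i => Sum.inr (m+1, i))) := by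
        rw [Set.disjoint_left]
        intro j hj hj'
        simp only [Set.mem_union, Set.mem_singleton_iff, Set.mem_range] at hj hj'
        rcases hj with rfl | ⟨i, rfl⟩
        · rcases hj' with h | ⟨i', h⟩
          · injection h with h2
            exact hnm (by omega)
          · exact absurd h (by simp)
        · rcases hj' with h | ⟨i', h⟩
          · exact absurd h (by simp)
          · simp only [Sum.inr.injEq, Prod.mk.injEq] at h
            exact hnm (by omega)
      have hind := indep_iSup_of_disjoint h_le hindep.iIndep hdisjS
      exact fm_indepFun_of_indep hind (hSset (n+1)) (hSset (m+1))
    -- integrability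
    have hXt1int : Integrable (fun ω => (Xt f 1 ω : ℝ)) P := by
      refine hintX1.mono ((fm_measurable_natCast.comp (hXtm 1)).aestronglyMeasurable) ?_
      refine Filter.Eventually.of_forall fun ω => ?_
      rw [Real.norm_eq_abs, Real.norm_eq_abs, abs_of_nonneg (by positivity),
        abs_of_nonneg (by positivity)]
      exact_mod_cast hXtle 1 ω
    have hintY1 : Integrable (fun ω => (Y 1 ω : ℝ)) P :=
      ((hid 1).comp (fm_measurable_natCast.comp measurable_snd)).integrable_iff.mpr hYint
    have hEY1 : ∫ ω, (Y 1 ω : ℝ) ∂P = EY :=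
      ((hid 1).comp (fm_measurable_natCast.comp measurable_snd)).integral_eq
    have hEX1 : ∫ ω, (X 1 ω : ℝ) ∂P = EX := (hXid 1).integral_eq
    -- expectation of Xt f 1
    have hPU : ∀ i : ℕ, P {ω | U 1 i ω ≤ f} = μ (Set.Iic f) := by
      intro i
      rw [show {ω | U 1 i ω ≤ f} = U 1 i ⁻¹' Set.Iic f from rfl,
        ← Measure.map_apply (hUm 1 i) measurableSet_Iic, hU]
    have hXU : ∀ i : ℕ, P {ω | i < X 1 ω ∧ U 1 i ω ≤ f}
        = P {ω | i < X 1 ω} * μ (Set.Iic f) := by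
      intro i
      have hIF : IndepFun (X 1) (U 1 i) P := by
        have h := hindep.indepFun (i := Sum.inl 1) (j := Sum.inr (1, i)) (by simp)
        exact h.comp (measurable_fst) measurable_id
      have h2 := hIF.meas_inter (s := {ω | i < X 1 ω}) (t := {ω | U 1 i ω ≤ f})
        ⟨Set.Ioi i, measurableSet_Ioi, rfl⟩ ⟨Set.Iic f, measurableSet_Iic, rfl⟩
      rw [show {ω | i < X 1 ω ∧ U 1 i ω ≤ f} = {ω | i < X 1 ω} ∩ {ω | U 1 i ω ≤ f} from rfl,
        h2, hPU]
    have hmeasXU : ∀ i : ℕ, MeasurableSet {ω | i < X 1 ω ∧ U 1 i ω ≤ f} :=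
      fun i => ((hXm 1) measurableSet_Ioi).inter ((hUm 1 i) measurableSet_Iic)
    have hmeasXi : ∀ i : ℕ, MeasurableSet {ω | i < X 1 ω} := fun i => (hXm 1) measurableSet_Ioi
    have hEXt : ∫ ω, (Xt f 1 ω : ℝ) ∂P = p * (∫ ω, (X 1 ω : ℝ) ∂P) := by
      have hFcard : ∀ (K : ℕ) ω, (∑ i ∈ Finset.range K,
          (if i < X 1 ω ∧ U 1 i ω ≤ f then (1:ℝ) else 0))
          = (((Finset.range K).filter (fun i => i < X 1 ω ∧ U 1 i ω ≤ f)).card : ℝ) := by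
        intro K ω
        rw [Finset.card_filter, Nat.cast_sum]
        refine Finset.sum_congr rfl fun i _ => ?_
        split <;> simp
      have hHcard : ∀ (K : ℕ) ω, (∑ i ∈ Finset.range K, (if i < X 1 ω then (1:ℝ) else 0))
          = (((Finset.range K).filter (fun i => i < X 1 ω)).card : ℝ) := by
        intro K ω
        rw [Finset.card_filter, Nat.cast_sum]
        refine Finset.sum_congr rfl fun i _ => ?_
        split <;> simp
      have hcardle : ∀ (K : ℕ) ω (q : ℕ → Prop) [DecidablePred q],
          ((Finset.range K).filter (fun i => i < X 1 ω ∧ q i)).card ≤ X 1 ω := by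
        intro K ω q _
        calc ((Finset.range K).filter (fun i => i < X 1 ω ∧ q i)).card
            ≤ ((Finset.range K).filter (fun i => i < X 1 ω)).card :=
              Finset.card_le_card (Finset.monotone_filter_right _ (fun i _ hi => hi.1))
          _ ≤ (Finset.range (X 1 ω)).card := Finset.card_le_card (fun i hi => by
              simp only [Finset.mem_filter, Finset.mem_range] at hi ⊢
              exact hi.2)
          _ = X 1 ω := Finset.card_range _
      -- dominated convergence for F
      have hF1 : Tendsto (fun K => ∫ ω, (∑ i ∈ Finset.range K,
          (if i < X 1 ω ∧ U 1 i ω ≤ f then (1:ℝ) else 0)) ∂P) atTop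
          (𝓝 (∫ ω, (Xt f 1 ω : ℝ) ∂P)) := by
        refine tendsto_integral_of_dominated_convergence (fun ω => (X 1 ω : ℝ)) ?_ hintX1 ?_ ?_
        · intro K
          apply Measurable.aestronglyMeasurable
          apply Finset.measurable_sum
          intro i _
          exact Measurable.ite (hmeasXU i) measurable_const measurable_const
        · intro K
          refine Filter.Eventually.of_forall fun ω => ?_
          rw [hFcard, Real.norm_eq_abs, abs_of_nonneg (by positivity)]
          beta_reduce
          exact_mod_cast hcardle K ω (fun i => U 1 i ω ≤ f)
        · refine Filter.Eventually.of_forall fun ω => ?_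
          apply tendsto_atTop_of_eventually_const (i₀ := X 1 ω)
          intro K hK
          rw [hFcard, hXt]
          congr 1
          congr 1
          ext i
          simp only [Finset.mem_filter, Finset.mem_range]
          exact ⟨fun h => h.2, fun h => ⟨lt_of_lt_of_le h.1 hK, h⟩⟩
      -- dominated convergence for H
      have hH1 : Tendsto (fun K => ∫ ω, (∑ i ∈ Finset.range K,
          (if i < X 1 ω then (1:ℝ) else 0)) ∂P) atTop (𝓝 (∫ ω, (X 1 ω : ℝ) ∂P)) := by
        refine tendsto_integral_of_dominated_convergence (fun ω => (X 1 ω : ℝ)) ?_ hintX1 ?_ ?_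
        · intro K
          apply Measurable.aestronglyMeasurable
          apply Finset.measurable_sum
          intro i _
          exact Measurable.ite (hmeasXi i) measurable_const measurable_const
        · intro K
          refine Filter.Eventually.of_forall fun ω => ?_
          rw [hHcard, Real.norm_eq_abs, abs_of_nonneg (by positivity)]
          have : ((Finset.range K).filter (fun i => i < X 1 ω)).card ≤ X 1 ω := by
            calc ((Finset.range K).filter (fun i => i < X 1 ω)).card
                ≤ (Finset.range (X 1 ω)).card := Finset.card_le_card (fun i hi => by
                  simp only [Finset.mem_filter, Finset.mem_range] at hi ⊢
                  exact hi.2)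
              _ = X 1 ω := Finset.card_range _
          beta_reduce
          exact_mod_cast this
        · refine Filter.Eventually.of_forall fun ω => ?_
          apply tendsto_atTop_of_eventually_const (i₀ := X 1 ω)
          intro K hK
          rw [hHcard]
          have : (Finset.range K).filter (fun i => i < X 1 ω) = Finset.range (X 1 ω) := by
            ext i
            simp only [Finset.mem_filter, Finset.mem_range]
            exact ⟨fun h => h.2, fun h => ⟨lt_of_lt_of_le h hK, h⟩⟩
          rw [this, Finset.card_range]
      -- compute the integrals of the partial sums
      have hintF : ∀ K : ℕ, ∫ ω, (∑ i ∈ Finset.range K,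
          (if i < X 1 ω ∧ U 1 i ω ≤ f then (1:ℝ) else 0)) ∂P
          = (∑ i ∈ Finset.range K, (P {ω | i < X 1 ω}).toReal) * p := by
        intro K
        rw [integral_finset_sum _ (fun i _ => fm_integrable_ite P _ (hmeasXU i))]
        rw [Finset.sum_mul]
        refine Finset.sum_congr rfl fun i _ => ?_
        rw [fm_integral_ite P _ (hmeasXU i), hXU i, ENNReal.toReal_mul]
      have hintH : ∀ K : ℕ, ∫ ω, (∑ i ∈ Finset.range K,
          (if i < X 1 ω then (1:ℝ) else 0)) ∂P
          = ∑ i ∈ Finset.range K, (P {ω | i < X 1 ω}).toReal := by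
        intro K
        rw [integral_finset_sum _ (fun i _ => fm_integrable_ite P _ (hmeasXi i))]
        refine Finset.sum_congr rfl fun i _ => ?_
        exact fm_integral_ite P _ (hmeasXi i)
      have h2 : Tendsto (fun K => (∑ i ∈ Finset.range K, (P {ω | i < X 1 ω}).toReal) * p)
          atTop (𝓝 ((∫ ω, (X 1 ω : ℝ) ∂P) * p)) := by
        apply Tendsto.mul_const
        have := hH1
        simp only [hintH] at this
        exact this
      have h3 : Tendsto (fun K => (∑ i ∈ Finset.range K, (P {ω | i < X 1 ω}).toReal) * p)
          atTop (𝓝 (∫ ω, (Xt f 1 ω : ℝ) ∂P)) := by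
        have := hF1
        simp only [hintF] at this
        exact this
      rw [tendsto_nhds_unique h3 h2, mul_comm]
    have hintD : Integrable (fun ω => (Xt f 1 ω : ℝ) - (Y 1 ω : ℝ)) P := hXt1int.sub hintY1
    have hED : ∫ ω, ((Xt f 1 ω : ℝ) - (Y 1 ω : ℝ)) ∂P = p * EX - EY := by
      rw [integral_sub hXt1int hintY1, hEXt, hEX1, hEY1]
    have hDid2 : ∀ n, IdentDistrib (fun ω => (Xt f (n+1) ω : ℝ) - (Y (n+1) ω : ℝ))
        (fun ω => (Xt f 1 ω : ℝ) - (Y 1 ω : ℝ)) P P := fun n => (hTid (n+1)).comp castm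
    have hslln2 : ∀ᵐ ω ∂P, Tendsto (fun k : ℕ => (∑ i ∈ Finset.range k,
        ((Xt f (i+1) ω : ℝ) - (Y (i+1) ω : ℝ))) / k) atTop (𝓝 (p * EX - EY)) := by
      have h := strong_law_ae_real (fun n ω => (Xt f (n+1) ω : ℝ) - (Y (n+1) ω : ℝ))
        hintD (fun n m hnm => hindep2 n m hnm) hDid2
      simpa [hED] using h
    have hA02 : ∀ᵐ ω ∂P, Tendsto (fun k : ℕ => (Xt f (k+1) ω : ℝ) / k) atTop (𝓝 0) := by
      filter_upwards [hA0X] with ω hω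
      apply tendsto_of_tendsto_of_tendsto_of_le_of_le tendsto_const_nhds hω
      · intro k; positivity
      · intro k
        beta_reduce
        rcases Nat.eq_zero_or_pos k with rfl | hk
        · simp
        · have hk' : (0:ℝ) < k := by exact_mod_cast hk
          exact (div_le_div_iff_of_pos_right hk').mpr (by exact_mod_cast hXtle (k+1) ω)
    have hmain := fm_main_aux (P := P) (fun n ω => (Xt f n ω : ℝ)) (fun n ω => (Y n ω : ℝ))
      (p * EX - EY) hslln2 hA02 (fun n ω => ((ZI f n ω : ℤ) : ℝ))
      (fun ω => by show ((ZI f 0 ω : ℤ) : ℝ) = 0; rw [hZI0]; simp)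
      (fun k ω => by
        show ((ZI f (2*k+1) ω : ℤ) : ℝ) = ((ZI f (2*k) ω : ℤ) : ℝ) + ((Xt f (k+1) ω : ℕ) : ℝ)
        rw [hZIodd]; push_cast; ring)
      (fun k ω => by
        show ((ZI f (2*k+2) ω : ℤ) : ℝ)
          = max 0 (((ZI f (2*k+1) ω : ℤ) : ℝ) - ((Y (k+1) ω : ℕ) : ℝ))
        rw [hZIeven]; push_cast; ring_nf)
    exact hmain
end
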